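/- arXiv:1403.6210 — 7 statements merged into one kernel-verified Lean document; each statement's English description precedes it below -/
import Mathlib

section
/- The number of times the letter S appears in the {S,D}-word representing a threshold graph T equals the clique number of T (the largest cardinality of a clique in T). -/
open Finset

/-- Number of cliques of `G` with exactly `i` vertices. -/
noncomputable def cliqueCount {V : Type*} (G : SimpleGraph V) (i : ℕ) : ℕ :=
  {s : Finset V | G.IsNClique i s}.ncard

/-- Clique number: the largest cardinality of a clique of `G`. -/
noncomputable def cliqueNum {V : Type*} (G : SimpleGraph V) : ℕ :=
  sSup {i : ℕ | ∃ s : Finset V, G.IsNClique i s}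

/-- `G` is `k`-connected: it has at least `k` vertices and removing any set of
fewer than `k` vertices leaves a connected graph. -/
def KConnected {V : Type*} [Fintype V] (G : SimpleGraph V) (k : ℕ) : Prop :=
  k ≤ Fintype.card V ∧
    ∀ s : Finset V, s.card < k → (G.induce ((↑s : Set V)ᶜ)).Connected

/-- The connectivity number `κ(G)`: the largest `k` such that `G` is `k`-connected. -/
noncomputable def connectivityNum {V : Type*} [Fintype V] (G : SimpleGraph V) : ℕ :=
  sSup {k : ℕ | KConnected G k}

/-- A graph is chordal if every cycle of length at least four has a chord. -/
def IsChordal {V : Type*} (G : SimpleGraph V) : Prop :=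
  ∀ (v : V) (c : G.Walk v v), c.IsCycle → 4 ≤ c.length →
    ∃ u w, u ∈ c.support ∧ w ∈ c.support ∧ G.Adj u w ∧ s(u, w) ∉ c.edges

/-- The threshold graph built from a word in the alphabet `{S, D}` (here
`true` = `S`, `false` = `D`), where the leftmost letter is the last operation
performed.  Vertex `i` corresponds to the `i`-th letter; two vertices are
adjacent iff the earlier (smaller-index, i.e. later-added) one is a dominating
vertex. -/
def thresholdGraph (w : List Bool) : SimpleGraph (Fin w.length) where
  Adj i j := i ≠ j ∧ w.get (min i j) = true
  symm := ⟨fun i j h => ⟨h.1.symm, by rw [min_comm]; exact h.2⟩⟩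
  loopless := ⟨fun i h => h.1 rfl⟩

/-- A valid threshold word: the final (rightmost) letter, i.e. the first
operation performed, is `S`. -/
def IsThresholdWord (w : List Bool) : Prop := w ≠ [] → w.getLast? = some true

/-- A graph is a threshold graph if it is isomorphic to the graph of some
threshold word. -/
def IsThresholdGraph {V : Type*} (G : SimpleGraph V) : Prop :=
  ∃ w : List Bool, IsThresholdWord w ∧ Nonempty (G ≃g thresholdGraph w)

/-- An abstract simplicial complex on vertex set `V`. -/
structure AbsCx (V : Type*) where
  faces : Set (Finset V)
  down_closed : ∀ ⦃s t : Finset V⦄, s ∈ faces → t ⊆ s → t ∈ faces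

/-- The clique complex of a graph: its faces are the cliques. -/
def cliqueComplex {V : Type*} (G : SimpleGraph V) : AbsCx V :=
  ⟨{s | G.IsClique (↑s : Set V)}, fun s t hs hts => hs.subset (Finset.coe_subset.mpr hts)⟩

/-- The induced subcomplex on a vertex subset `W`. -/
def AbsCx.restrict {V : Type*} (K : AbsCx V) (W : Set V) : AbsCx V :=
  ⟨{s | s ∈ K.faces ∧ (↑s : Set V) ⊆ W},
   fun s t hs hts =>
     ⟨K.down_closed hs.1 hts, le_trans (Finset.coe_subset.mpr hts) hs.2⟩⟩

/-- A complex is flag if every minimal non-face has exactly two elements. -/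
def AbsCx.IsFlag {V : Type*} (K : AbsCx V) : Prop :=
  ∀ s : Finset V, s ∉ K.faces → (∀ t ⊂ s, t ∈ K.faces) → s.card = 2

/-- A complex on `Fin n` is shifted if exchanging a vertex of a face by a
smaller vertex not in the face again yields a face. -/
def AbsCx.IsShifted {n : ℕ} (K : AbsCx (Fin n)) : Prop :=
  ∀ s ∈ K.faces, ∀ i ∈ s, ∀ j, j ∉ s → j < i → insert j (s.erase i) ∈ K.faces

/-- Faces of (integer) dimension `d`, i.e. of cardinality `d + 1`. -/
def AbsCx.dimFaces {V : Type*} (K : AbsCx V) (d : ℤ) : Type _ :=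
  {s : Finset V // s ∈ K.faces ∧ (s.card : ℤ) = d + 1}

/-- The simplicial (augmented) boundary map of a complex, on `d`-dimensional
chains with coefficients in `𝕜`. -/
noncomputable def chainBoundary {V : Type*} [LinearOrder V] (K : AbsCx V)
    (𝕜 : Type*) [Field 𝕜] (d : ℤ) :
    (K.dimFaces d →₀ 𝕜) →ₗ[𝕜] (K.dimFaces (d - 1) →₀ 𝕜) :=
  Finsupp.lsum 𝕜 fun F =>
    LinearMap.toSpanSingleton 𝕜 _
      (∑ v ∈ F.1.attach,
        ((-1 : 𝕜) ^ (F.1.filter (fun x => x < v.1)).card) •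
          Finsupp.single
            (⟨F.1.erase v.1,
              K.down_closed F.2.1 (Finset.erase_subset _ _),
              by
                obtain ⟨hf, hc⟩ := F.2
                have h1 : 1 ≤ F.1.card := Finset.card_pos.mpr ⟨v.1, v.2⟩
                rw [Finset.card_erase_of_mem v.2, Nat.cast_sub h1]
                omega⟩ : K.dimFaces (d - 1))
            (1 : 𝕜))

/-- The dimension of the `d`-th reduced simplicial homology of `K` with
coefficients in `𝕜` (computed as `dim ker ∂_d − dim im ∂_{d+1}`). -/
noncomputable def AbsCx.homDim {V : Type*} [LinearOrder V] (𝕜 : Type*) [Field 𝕜]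
    (K : AbsCx V) (d : ℤ) : ℕ :=
  Module.finrank 𝕜 (LinearMap.ker (chainBoundary K 𝕜 d)) -
    Module.finrank 𝕜 (LinearMap.range (chainBoundary K 𝕜 (d + 1)))

/-- The graded Betti numbers `β_{i,j}` of the Stanley–Reisner ring `𝕜[K]`,
given by Hochster's formula: `β_{i,j} = Σ_{|W| = j} dim_𝕜 H̃_{j-i-1}(K_W)`. -/
noncomputable def srBetti (𝕜 : Type*) [Field 𝕜] {n : ℕ} (K : AbsCx (Fin n))
    (i j : ℕ) : ℕ :=
  ∑ W ∈ Finset.powersetCard j (Finset.univ : Finset (Fin n)),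
    AbsCx.homDim 𝕜 (K.restrict (↑W : Set (Fin n))) ((j : ℤ) - i - 1)

/-- The projective dimension of the Stanley–Reisner ring `𝕜[K]` over the
polynomial ring: the largest homological degree with a nonzero Betti number. -/
noncomputable def srProjDim (𝕜 : Type*) [Field 𝕜] {n : ℕ} (K : AbsCx (Fin n)) : ℕ :=
  sSup {i : ℕ | ∃ j : ℕ, srBetti 𝕜 K i j ≠ 0}

/-- The depth of the Stanley–Reisner ring `𝕜[K]`, via the
Auslander–Buchsbaum formula `depth = n − projdim`. -/
noncomputable def srDepth (𝕜 : Type*) [Field 𝕜] {n : ℕ} (K : AbsCx (Fin n)) : ℕ :=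
  n - srProjDim 𝕜 K

/-- The lengths of the blocks obtained by splitting a threshold word
immediately after each `S` (= `true`); the `b`-vector of the word. -/
def blocks : List Bool → List ℕ
  | [] => []
  | true :: rest => 1 :: blocks rest
  | false :: rest =>
    match blocks rest with
    | [] => []
    | b :: bs => (b + 1) :: bs

/-- One plus the dimension of a complex: the largest cardinality of a face. -/
noncomputable def AbsCx.dimPlusOne {V : Type*} (K : AbsCx V) : ℕ :=
  sSup {c : ℕ | ∃ s ∈ K.faces, s.card = c}

/-- `K` is Cohen–Macaulay over `𝕜` iff the depth of `𝕜[K]` equals its Krull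
dimension `dim K + 1`. -/
def IsCohenMacaulay (𝕜 : Type*) [Field 𝕜] {n : ℕ} (K : AbsCx (Fin n)) : Prop :=
  srDepth 𝕜 K = K.dimPlusOne

/-- The Alexander dual complex. -/
def AbsCx.dual {n : ℕ} (K : AbsCx (Fin n)) : AbsCx (Fin n) :=
  ⟨{s | Finset.univ \ s ∉ K.faces},
   fun s t hs hts h => hs (K.down_closed h (Finset.sdiff_subset_sdiff (le_refl _) hts))⟩

/-- The number of faces of `K` with exactly `i` vertices (the `f`-vector). -/
noncomputable def AbsCx.faceCount {V : Type*} (K : AbsCx V) (i : ℕ) : ℕ :=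
  {s ∈ K.faces | s.card = i}.ncard
lemma tcard_aux (w : List Bool) : (Finset.univ.filter fun i : Fin w.length => w.get i = true).card = w.count true := by
  induction w with
  | nil => simp
  | cons a t ih =>
    rw [Finset.card_filter]
    simp only [List.length_cons]
    rw [Fin.sum_univ_succ, List.count_cons]
    simp only [List.get_cons_succ, ← Finset.card_filter, ih]
    simp only [List.get_eq_getElem] at ih
    cases a <;> simp [add_comm, ih]

/-- the number of `S`'s in the word of a threshold graph equals
its clique number. -/
theorem count_S_eq_cliqueNum (w : List Bool) (hw : IsThresholdWord w) :
    w.count true = cliqueNum (thresholdGraph w) := by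
  set T : Finset (Fin w.length) := Finset.univ.filter fun i => w.get i = true with hT
  have hTmem : ∀ i, i ∈ T ↔ w.get i = true := by intro i; simp [hT]
  have hTclique : (thresholdGraph w).IsClique ↑T := by
    intro i hi j hj hij
    refine ⟨hij, ?_⟩
    rcases le_total i j with h | h
    · rw [min_eq_left h]; exact (hTmem i).mp hi
    · rw [min_eq_right h]; exact (hTmem j).mp hj
  have hub : ∀ n (s : Finset (Fin w.length)), (thresholdGraph w).IsNClique n s → n ≤ w.count true := by
    intro n s hs
    rcases s.eq_empty_or_nonempty with rfl | hne
    · rw [← hs.2]; simp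
    · set m := s.max' hne with hm
      have hms : m ∈ s := s.max'_mem hne
      have herase : ∀ x ∈ s.erase m, w.get x = true := by
        intro x hx
        obtain ⟨hxm, hxs⟩ := Finset.mem_erase.mp hx
        have hadj := hs.1 (Finset.mem_coe.mpr hxs) (Finset.mem_coe.mpr hms) hxm
        have hle : x ≤ m := s.le_max' x hxs
        obtain ⟨-, h2⟩ := hadj
        rwa [min_eq_left hle] at h2
      rw [← hs.2, ← tcard_aux w]
      by_cases hgm : w.get m = true
      · apply Finset.card_le_card
        intro x hx
        rw [hTmem]
        by_cases hxm : x = m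
        · rw [hxm]; exact hgm
        · exact herase x (Finset.mem_erase.mpr ⟨hxm, hx⟩)
      · have hpos : 0 < w.length := m.2.trans_le' (Nat.zero_le _)
        have hwne : w ≠ [] := List.ne_nil_of_length_pos hpos
        set L : Fin w.length := ⟨w.length - 1, by omega⟩ with hLdef
        have hL : w.get L = true := by
          have := hw hwne
          rw [List.getLast?_eq_getElem?] at this
          have h2 : w[w.length - 1]? = some w[w.length - 1] := List.getElem?_eq_getElem (by omega)
          rw [h2] at this
          simpa [hLdef] using (Option.some_injective _ this)
        have hmL : m < L := by
          have hne' : m ≠ L := by intro h; rw [h, hL] at hgm; exact hgm rfl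
          have : (m : ℕ) ≤ w.length - 1 := by omega
          exact lt_of_le_of_ne (Fin.le_def.mpr this) hne'
        have hLs : L ∉ s.erase m := by
          intro h
          have := s.le_max' L (Finset.mem_of_mem_erase h)
          exact absurd (lt_of_lt_of_le hmL this) (lt_irrefl _)
        have hcard : (insert L (s.erase m)).card = s.card := by
          rw [Finset.card_insert_of_notMem hLs, Finset.card_erase_of_mem hms]
          have : 1 ≤ s.card := Finset.card_pos.mpr hne
          omega
        rw [← hcard]
        apply Finset.card_le_card
        intro x hx
        rw [hTmem]
        rcases Finset.mem_insert.mp hx with rfl | hx'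
        · exact hL
        · exact herase x hx'
  have hmem : w.count true ∈ {i : ℕ | ∃ s : Finset (Fin w.length), (thresholdGraph w).IsNClique i s} :=
    ⟨T, hTclique, tcard_aux w⟩
  refine le_antisymm ?_ ?_
  · exact le_csSup ⟨w.count true, fun n ⟨s, hs⟩ => hub n s hs⟩ hmem
  · exact csSup_le ⟨_, hmem⟩ (fun n ⟨s, hs⟩ => hub n s hs)
end

section
/- A threshold graph T with word w in the alphabet {S,D} is k-connected if and only if no D occurs among the first k letters of w. -/
open Finset

/-- a threshold graph with word `w` is `k`-connected iff no `D`
occurs among the first `k` letters of `w`. -/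
theorem threshold_kConnected_iff (w : List Bool) (hw : IsThresholdWord w)
    (k : ℕ) (hk : k ≤ w.length) :
    KConnected (thresholdGraph w) k ↔
      ∀ i : Fin w.length, (i : ℕ) < k → w.get i = true := by
  constructor
  · rintro ⟨-, hconn⟩ i hi
    by_contra hfalse
    have hne : w ≠ [] := List.ne_nil_of_length_pos i.pos
    have hlast : (i : ℕ) < w.length - 1 := by
      rcases Nat.lt_or_ge (i : ℕ) (w.length - 1) with h | h
      · exact h
      · exfalso
        have hi' : (i : ℕ) = w.length - 1 := le_antisymm (by omega) h
        apply hfalse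
        have := hw hne
        rw [List.getLast?_eq_getLast hne, Option.some_inj] at this
        rw [← this, List.getLast_eq_getElem]
        simp only [List.get_eq_getElem]
        congr 1
    have hconn' := hconn (Finset.Iio i) (by rw [Fin.card_Iio]; exact hi)
    set G := thresholdGraph w with hG
    have hi_mem : (i : Fin w.length) ∈ (↑(Finset.Iio i) : Set (Fin w.length))ᶜ := by simp
    have hj : (⟨w.length - 1, by omega⟩ : Fin w.length) ∈
        (↑(Finset.Iio i) : Set (Fin w.length))ᶜ := by
      simp only [Set.mem_compl_iff, Finset.coe_Iio, Set.mem_Iio, not_lt, Fin.le_def]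
      omega
    obtain ⟨p⟩ := hconn'.preconnected ⟨i, hi_mem⟩ ⟨_, hj⟩
    have hne2 : (⟨i, hi_mem⟩ : ((↑(Finset.Iio i) : Set (Fin w.length))ᶜ : Set _)) ≠ ⟨_, hj⟩ := by
      intro h
      have h2 : (i : ℕ) = w.length - 1 := by
        have := congrArg (fun x => ((x.val : Fin w.length) : ℕ)) h
        simpa using this
      omega
    have hadj := p.adj_snd (SimpleGraph.Walk.not_nil_of_ne hne2)
    set b := p.getVert 1 with hb
    have hadj' : G.Adj i b.val := hadj
    have hble : i ≤ b.val := by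
      have := b.2
      simpa using this
    have hmin : min i b.val = i := min_eq_left hble
    have := hadj'.2
    rw [hmin] at this
    exact hfalse this
  · intro hall
    refine ⟨by simpa using hk, fun s hs => ?_⟩
    have hex : ∃ m : Fin w.length, (m : ℕ) < k ∧ m ∉ s := by
      by_contra hno
      push_neg at hno
      have hsubset : (Finset.univ.filter (fun j : Fin w.length => (j : ℕ) < k)) ⊆ s := by
        intro j hj
        simp only [Finset.mem_filter, Finset.mem_univ, true_and] at hj
        exact hno j hj
      have hcard := Finset.card_le_card hsubset
      have heq : (Finset.univ.filter (fun j : Fin w.length => (j : ℕ) < k)).card = k := by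
        rcases Nat.eq_zero_or_pos k with hk0 | hk0
        · simp [hk0]
        have : Finset.univ.filter (fun j : Fin w.length => (j : ℕ) < k)
            = Finset.Iic (⟨k - 1, by omega⟩ : Fin w.length) := by
          ext j
          simp [Fin.le_def]
          omega
        rw [this, Fin.card_Iic]
        simp
        omega
      omega
    obtain ⟨m, hmk, hms⟩ := hex
    have hmtrue : w.get m = true := hall m hmk
    have hm_mem : m ∈ (↑s : Set (Fin w.length))ᶜ := by simpa using hms
    rw [SimpleGraph.connected_iff]
    have key : ∀ z : ((↑s : Set (Fin w.length))ᶜ : Set _),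
        ((thresholdGraph w).induce _).Reachable z ⟨m, hm_mem⟩ := by
      rintro ⟨zv, hz⟩
      rcases eq_or_ne zv m with rfl | hzm
      · exact SimpleGraph.Reachable.refl _
      · refine SimpleGraph.Adj.reachable ?_
        show (thresholdGraph w).Adj zv m
        exact ⟨hzm, hall _ (lt_of_le_of_lt (min_le_right _ _) hmk)⟩
    exact ⟨fun x y => (key x).trans (key y).symm, ⟨⟨m, hm_mem⟩⟩⟩
end

section
/- Let T be a threshold graph with clique number d, and let b_i be the length of the i-th block when the word of T is split immediately after each occurrence of S. Then the clique vector (c_1,…,c_d) of T satisfies Σ_{i=1}^d b_i·(x+1)^{i-1} = Σ_{i=1}^d c_i·x^{i-1} as polynomials in x. -/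
open Finset

open Polynomial

lemma lastTrue_tail {a : Bool} {rest : List Bool} (hr : rest ≠ [])
    (h : (a :: rest).getLast? = some true) : rest.getLast? = some true := by
  rw [List.getLast?_eq_getLast_of_ne_nil hr]
  rw [List.getLast?_eq_getLast_of_ne_nil (by simp), List.getLast_cons hr] at h
  exact h

lemma blocks_ne_nil (w : List Bool) (hw : w ≠ []) (h : w.getLast? = some true) :
    blocks w ≠ [] := by
  induction w with
  | nil => exact absurd rfl hw
  | cons a rest ih =>
    rcases a with _ | _
    · have hr : rest ≠ [] := by rintro rfl; simp [List.getLast?] at h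
      have := ih hr (lastTrue_tail hr h)
      simp only [blocks]
      rcases hb : blocks rest with _ | ⟨b, bs⟩
      · exact absurd hb this
      · simp
    · simp [blocks]

lemma blocks_getD (w : List Bool) (hw : w ≠ [] → w.getLast? = some true) (i : ℕ) :
    (blocks w).getD i 0 =
      ∑ v ∈ Finset.range w.length, (if (w.take v).count true = i then 1 else 0) := by
  induction w generalizing i with
  | nil => simp [blocks]
  | cons a rest ih =>
    have h' : rest ≠ [] → rest.getLast? = some true := fun hr =>
      lastTrue_tail hr (hw (by simp))
    have hsum : ∀ j : ℕ,
        (∑ v ∈ Finset.range (a :: rest).length,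
            if ((a :: rest).take v).count true = j then 1 else 0) =
          (∑ v ∈ Finset.range rest.length,
            if (rest.take v).count true + (if a = true then 1 else 0) = j
              then 1 else 0) +
            (if 0 = j then 1 else 0) := by
      intro j
      rw [List.length_cons, Finset.sum_range_succ']
      congr 1
      refine Finset.sum_congr rfl fun v _ => ?_
      rw [List.take_succ_cons, List.count_cons]
      cases a <;> simp
    rw [hsum i]
    rcases a with _ | _
    · -- a = false
      have hr : rest ≠ [] := by
        rintro rfl
        have := hw (by simp)
        simp [List.getLast?] at this
      have hbn := blocks_ne_nil rest hr (h' hr)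
      rcases hb : blocks rest with _ | ⟨b, bs⟩
      · exact absurd hb hbn
      · have key : ∀ j, (b :: bs).getD j 0 =
            ∑ v ∈ Finset.range rest.length,
              (if (rest.take v).count true = j then 1 else 0) := by
          intro j; rw [← hb]; exact ih h' j
        simp only [blocks, hb]
        rcases i with _ | i
        · have hk := key 0
          simp only [List.getD_cons_zero] at hk
          simp [hk]
        · have hk := key (i + 1)
          simp only [List.getD_cons_succ] at hk ⊢
          rw [hk]
          simp
    · -- a = true
      simp only [blocks]
      rcases i with _ | i
      · simp
      · have h0 : (if 0 = i + 1 then 1 else 0) = 0 := by simp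
        simp only [List.getD_cons_succ, h0, Nat.add_zero]
        rw [ih h' i]
        refine Finset.sum_congr rfl fun v _ => ?_
        by_cases hc : (rest.take v).count true = i
        · rw [if_pos hc, if_pos (by simp; omega)]
        · rw [if_neg hc, if_neg (by simp; omega)]

lemma count_take_sum (l : List Bool) (m : ℕ) :
    (l.take m).count true =
      ∑ v ∈ Finset.range m, (if l.getD v false = true then 1 else 0) := by
  induction m with
  | zero => simp
  | succ m ih =>
    rw [Finset.sum_range_succ, ← ih, List.take_succ]
    rcases h : l[m]? with _ | b
    · simp [List.getD, h]
    · simp [List.getD, h, List.count_singleton']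

lemma getD_eq_get (w : List Bool) (u : Fin w.length) :
    w.getD u.val false = w.get u := by
  rw [List.getD_eq_getElem w false u.isLt]
  rfl

/-- number of `true`s among the first `m` positions, as a Fin-filter card. -/
lemma card_filter_lt (w : List Bool) (m : ℕ) (hm : m ≤ w.length) :
    (Finset.univ.filter (fun u : Fin w.length => u.val < m ∧ w.get u = true)).card
      = (w.take m).count true := by
  classical
  rw [Finset.card_filter]
  have h1 : ∀ u : Fin w.length, (if u.val < m ∧ w.get u = true then (1:ℕ) else 0)
      = (fun v : ℕ => if v < m ∧ w.getD v false = true then (1:ℕ) else 0) u.val :=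
    fun u => by simp only [getD_eq_get]
  rw [Finset.sum_congr rfl fun u _ => h1 u,
    Fin.sum_univ_eq_sum_range (fun v => if v < m ∧ w.getD v false = true then 1 else 0)]
  · rw [count_take_sum]
    have h2 : (∑ v ∈ Finset.range w.length,
          if v < m ∧ w.getD v false = true then (1:ℕ) else 0) =
        ∑ v ∈ Finset.range m, if v < m ∧ w.getD v false = true then (1:ℕ) else 0 :=
      (Finset.sum_subset (Finset.range_subset_range.mpr hm) (fun x _ hx => by
        rw [Finset.mem_range] at hx; simp [hx])).symm
    rw [h2]
    exact Finset.sum_congr rfl fun v hv => by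
      rw [Finset.mem_range] at hv; simp [hv]

lemma isClique_iff' (w : List Bool) (s : Finset (Fin w.length)) :
    (thresholdGraph w).IsClique ↑s ↔
      ∀ a ∈ s, ∀ b ∈ s, a < b → w.get a = true := by
  constructor
  · intro h a ha b hb hab
    have := h (Finset.mem_coe.mpr ha) (Finset.mem_coe.mpr hb) (ne_of_lt hab)
    have hm : min a b = a := min_eq_left hab.le
    rw [← hm]
    exact this.2
  · intro h a ha b hb hab
    rcases lt_or_gt_of_ne hab with hlt | hgt
    · exact ⟨hab, by rw [min_eq_left hlt.le]; exact h a (Finset.mem_coe.mp ha) b (Finset.mem_coe.mp hb) hlt⟩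
    · exact ⟨hab, by rw [min_eq_right hgt.le]; exact h b (Finset.mem_coe.mp hb) a (Finset.mem_coe.mp ha) hgt⟩

lemma cliqueCount_succ (w : List Bool) (k : ℕ) :
    cliqueCount (thresholdGraph w) (k + 1) =
      ∑ v ∈ Finset.range w.length, ((w.take v).count true).choose k := by
  classical
  set n := w.length with hn
  obtain ⟨T, hT⟩ : ∃ T : Fin n → Finset (Fin n),
      T = fun v => Finset.univ.filter (fun u : Fin n => u < v ∧ w.get u = true) := ⟨_, rfl⟩
  obtain ⟨F, hF⟩ : ∃ F : Fin n → Finset (Finset (Fin n)),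
      F = fun v => ((T v).powersetCard k).image (insert v) := ⟨_, rfl⟩
  have hFiff : ∀ (v : Fin n) (s : Finset (Fin n)),
      s ∈ F v ↔ ∃ r, (∀ u ∈ r, u < v ∧ w.get u = true) ∧ r.card = k ∧ insert v r = s := by
    intro v s
    constructor
    · intro hs
      rw [hF] at hs
      obtain ⟨r, hr, hrs⟩ := Finset.mem_image.mp hs
      rw [Finset.mem_powersetCard] at hr
      rw [hT] at hr
      exact ⟨r, fun u hu => (Finset.mem_filter.mp (hr.1 hu)).2, hr.2, hrs⟩
    · rintro ⟨r, h1, h2, rfl⟩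
      rw [hF, hT]
      exact Finset.mem_image.mpr ⟨r, Finset.mem_powersetCard.mpr
        ⟨fun u hu => Finset.mem_filter.mpr ⟨Finset.mem_univ u, h1 u hu⟩, h2⟩, rfl⟩
  have hmem : ∀ (v : Fin n) (s : Finset (Fin n)), s ∈ F v →
      ((thresholdGraph w).IsNClique (k+1) s ∧ v ∈ s ∧ ∀ u ∈ s, u ≤ v) := by
    intro v s hs
    obtain ⟨r, hru, hrk, rfl⟩ := (hFiff v s).mp hs
    have hvr : v ∉ r := fun h => absurd (hru v h).1 (lt_irrefl v)
    refine ⟨⟨?_, ?_⟩, Finset.mem_insert_self v r, ?_⟩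
    · rw [isClique_iff']
      intro a ha b hb hab
      rcases Finset.mem_insert.mp ha with rfl | har
      · refine absurd hab (not_lt.mpr ?_)
        rcases Finset.mem_insert.mp hb with rfl | hbr
        · exact le_refl _
        · exact (hru b hbr).1.le
      · exact (hru a har).2
    · rw [Finset.card_insert_of_notMem hvr, hrk]
    · intro u hu
      rcases Finset.mem_insert.mp hu with rfl | hur
      · exact le_refl u
      · exact (hru u hur).1.le
  have hdisj : ∀ v ∈ (Finset.univ : Finset (Fin n)), ∀ v' ∈ Finset.univ,
      v ≠ v' → Disjoint (F v) (F v') := by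
    intro v _ v' _ hvv'
    rw [Finset.disjoint_left]
    intro s hs hs'
    obtain ⟨_, hv, hle⟩ := hmem v s hs
    obtain ⟨_, hv', hle'⟩ := hmem v' s hs'
    exact hvv' (le_antisymm (hle' v hv) (hle v' hv'))
  have hcover : Finset.univ.filter (fun s => (thresholdGraph w).IsNClique (k+1) s) =
      Finset.univ.biUnion F := by
    apply Finset.ext
    intro s
    rw [Finset.mem_filter, Finset.mem_biUnion]
    simp only [Finset.mem_univ, true_and]
    constructor
    · intro hs
      have hne : s.Nonempty := Finset.card_pos.mp (by rw [hs.card_eq]; omega)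
      refine ⟨s.max' hne, ?_⟩
      rw [hFiff _ s]
      refine ⟨s.erase (s.max' hne), ?_, ?_, ?_⟩
      · intro u hu
        have huM : u ≠ s.max' hne := Finset.ne_of_mem_erase hu
        have hus : u ∈ s := Finset.mem_of_mem_erase hu
        have hlt : u < s.max' hne := lt_of_le_of_ne (s.le_max' u hus) huM
        exact ⟨hlt, (isClique_iff' w s).mp hs.isClique u hus _ (s.max'_mem hne) hlt⟩
      · rw [Finset.card_erase_of_mem (s.max'_mem hne), hs.card_eq]
        omega
      · exact Finset.insert_erase (s.max'_mem hne)
    · rintro ⟨v, hv⟩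
      exact (hmem v s hv).1
  have hcard : ∀ v : Fin n, (F v).card = ((w.take v.val).count true).choose k := by
    intro v
    have : (F v).card = ((T v).powersetCard k).card := by
      rw [hF]
      apply Finset.card_image_of_injOn
      intro r hr r' hr' hins
      rw [Finset.mem_coe, Finset.mem_powersetCard, hT] at hr hr'
      have hvr : v ∉ r := fun h => by
        have := Finset.mem_filter.mp (hr.1 h); exact absurd this.2.1 (lt_irrefl v)
      have hvr' : v ∉ r' := fun h => by
        have := Finset.mem_filter.mp (hr'.1 h); exact absurd this.2.1 (lt_irrefl v)
      rw [← Finset.erase_insert hvr, ← Finset.erase_insert hvr', hins]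
    rw [this, Finset.card_powersetCard, hT]
    congr 1
    exact card_filter_lt w v.val v.isLt.le
  have hset : {s : Finset (Fin n) | (thresholdGraph w).IsNClique (k+1) s} =
      ↑(Finset.univ.filter (fun s => (thresholdGraph w).IsNClique (k+1) s)) := by
    ext s; simp
  rw [cliqueCount, hset, Set.ncard_coe_finset, hcover, Finset.card_biUnion hdisj,
    ← Fin.sum_univ_eq_sum_range (fun v => ((w.take v).count true).choose k) w.length]
  exact Finset.sum_congr rfl fun v _ => hcard v

lemma count_take_lt (w : List Bool) (hw : w.getLast? = some true) (v : ℕ) (hv : v < w.length) :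
    (w.take v).count true < w.count true := by
  have hsplit : w = w.take v ++ w.drop v := (List.take_append_drop v w).symm
  have hdne : w.drop v ≠ [] := by
    intro h
    have := (List.length_drop : (w.drop v).length = w.length - v)
    rw [h] at this
    simp at this
    omega
  have hmem : true ∈ w.drop v := by
    have hl := List.getLast?_eq_getLast_of_ne_nil hdne
    have : w.getLast? = (w.drop v).getLast? := by
      conv_lhs => rw [hsplit]
      rw [List.getLast?_append_of_ne_nil _ hdne]
    rw [this, hl] at hw
    have := List.getLast_mem hdne
    rw [Option.some_inj.mp hw] at this
    exact this
  have h1 : 1 ≤ (w.drop v).count true := List.one_le_count_iff.mpr hmem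
  conv_rhs => rw [hsplit]
  rw [List.count_append]
  omega

lemma cliqueNum_eq (w : List Bool) (hw : w ≠ [] → w.getLast? = some true) :
    cliqueNum (thresholdGraph w) = w.count true := by
  classical
  have hub : ∀ i ∈ {i : ℕ | ∃ s : Finset (Fin w.length), (thresholdGraph w).IsNClique i s},
      i ≤ w.count true := by
    rintro i ⟨s, hs⟩
    rcases s.eq_empty_or_nonempty with rfl | hne
    · rw [← hs.card_eq]
      simp
    · have hM := s.max'_mem hne
      set M := s.max' hne with hMdef
      have hwne : w ≠ [] := by
        intro h
        have : w.length = 0 := by rw [h]; rfl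
        omega
      have hsub : s ⊆ insert M (Finset.univ.filter
          (fun u : Fin w.length => u.val < M.val ∧ w.get u = true)) := by
        intro a ha
        rcases eq_or_ne a M with rfl | haM
        · exact Finset.mem_insert_self _ _
        · have hlt : a < M := lt_of_le_of_ne (s.le_max' a ha) haM
          refine Finset.mem_insert_of_mem (Finset.mem_filter.mpr ⟨Finset.mem_univ _, hlt, ?_⟩)
          exact (isClique_iff' w s).mp hs.isClique a ha M hM hlt
      have h1 := Finset.card_le_card hsub
      have h2 := Finset.card_insert_le M (Finset.univ.filter
          (fun u : Fin w.length => u.val < M.val ∧ w.get u = true))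
      rw [card_filter_lt w M.val M.isLt.le] at h2
      have h3 := count_take_lt w (hw hwne) M.val M.isLt
      rw [← hs.card_eq]
      omega
  have hmem : w.count true ∈
      {i : ℕ | ∃ s : Finset (Fin w.length), (thresholdGraph w).IsNClique i s} := by
    refine ⟨Finset.univ.filter (fun u : Fin w.length => w.get u = true), ?_, ?_⟩
    · rw [isClique_iff']
      intro a ha b hb hab
      exact (Finset.mem_filter.mp ha).2
    · have : (Finset.univ.filter (fun u : Fin w.length => w.get u = true)) =
          (Finset.univ.filter
            (fun u : Fin w.length => u.val < w.length ∧ w.get u = true)) := by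
        apply Finset.filter_congr
        intro u _
        simp [u.isLt]
      rw [this, card_filter_lt w w.length le_rfl, List.take_length]
  exact le_antisymm (csSup_le ⟨w.count true, hmem⟩ hub) (le_csSup ⟨w.count true, hub⟩ hmem)

/-- if `b` is the vector of block lengths of the word of a
threshold graph `T` with clique number `d`, then
`Σ_{i=1}^d b_i (x+1)^{i-1} = Σ_{i=1}^d c_i x^{i-1}`. -/
theorem bVector_cliqueVector (w : List Bool) (hw : IsThresholdWord w) :
    ∑ i ∈ Finset.range (cliqueNum (thresholdGraph w)),
        ((blocks w).getD i 0 : Polynomial ℤ) * (Polynomial.X + 1) ^ i =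
      ∑ i ∈ Finset.range (cliqueNum (thresholdGraph w)),
        (cliqueCount (thresholdGraph w) (i + 1) : Polynomial ℤ) * Polynomial.X ^ i := by
  have hw' : w ≠ [] → w.getLast? = some true := hw
  rw [cliqueNum_eq w hw']
  set t := w.count true with ht
  set n := w.length with hn
  have htv : ∀ v ∈ Finset.range n, (w.take v).count true < t := by
    intro v hv
    rw [Finset.mem_range] at hv
    have hwne : w ≠ [] := by
      intro h
      have h0 : n = 0 := by rw [hn, h]; rfl
      omega
    exact count_take_lt w (hw' hwne) v hv
  have key : ∀ m : ℕ, m < t →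
      ((X : Polynomial ℤ) + 1)^m = ∑ i ∈ range t, (m.choose i : Polynomial ℤ) * X^i := by
    intro m hm
    rw [add_pow]
    rw [Finset.sum_subset (Finset.range_subset_range.mpr hm)]
    · exact Finset.sum_congr rfl fun i _ => by rw [one_pow, mul_one, mul_comm]
    · intro i _ hi
      rw [Finset.mem_range, not_lt] at hi
      rw [Nat.choose_eq_zero_of_lt (by omega)]
      simp
  have lhs_eq : ∑ i ∈ Finset.range t,
        ((blocks w).getD i 0 : Polynomial ℤ) * (X + 1) ^ i =
      ∑ v ∈ Finset.range n, ((X : Polynomial ℤ) + 1) ^ ((w.take v).count true) := by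
    have : ∀ i, ((blocks w).getD i 0 : Polynomial ℤ) =
        ∑ v ∈ Finset.range n, (if (w.take v).count true = i then 1 else 0) := by
      intro i
      rw [blocks_getD w hw' i]
      push_cast
      exact Finset.sum_congr rfl fun v _ => by split <;> simp
    simp_rw [this, Finset.sum_mul]
    rw [Finset.sum_comm]
    refine Finset.sum_congr rfl fun v hv => ?_
    simp_rw [ite_mul, one_mul, zero_mul]
    rw [Finset.sum_ite_eq (Finset.range t) ((w.take v).count true) (fun i => ((X:Polynomial ℤ)+1)^i)]
    rw [if_pos (Finset.mem_range.mpr (htv v hv))]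
  have rhs_eq : ∑ i ∈ Finset.range t,
        (cliqueCount (thresholdGraph w) (i + 1) : Polynomial ℤ) * X ^ i =
      ∑ v ∈ Finset.range n, ((X : Polynomial ℤ) + 1) ^ ((w.take v).count true) := by
    have : ∀ i : ℕ, (cliqueCount (thresholdGraph w) (i+1) : Polynomial ℤ) =
        ∑ v ∈ Finset.range n, (((w.take v).count true).choose i : Polynomial ℤ) := by
      intro i
      rw [cliqueCount_succ w i]
      push_cast
      rfl
    simp_rw [this, Finset.sum_mul]
    rw [Finset.sum_comm]
    exact Finset.sum_congr rfl fun v hv => (key _ (htv v hv)).symm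
  rw [lhs_eq, rhs_eq]
end

section
/- The map sending a threshold graph T to its b-vector is a bijection between the set of k-connected threshold graphs on n vertices with clique number d and the set of vectors (b_1,…,b_d) of positive integers summing to n with b_1 = … = b_k = 1. -/
open Finset

def word (l : List ℕ) : List Bool := (l.map fun b => List.replicate (b-1) false ++ [true]).flatten

lemma word_cons (b l) : word (b :: l) = (List.replicate (b-1) false ++ [true]) ++ word l := rfl

lemma blocks_true (r) : blocks (true :: r) = 1 :: blocks r := rfl

lemma blocks_aux (m) (r : List Bool) : blocks (List.replicate m false ++ true :: r) = (m+1) :: blocks r := by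
  induction m with
  | zero => rfl
  | succ m ih =>
    show blocks (false :: (List.replicate m false ++ true :: r)) = _
    rw [show blocks (false :: (List.replicate m false ++ true :: r)) = _ from rfl]
    simp [blocks, ih]

lemma blocks_pos (w : List Bool) : ∀ x ∈ blocks w, 0 < x := by
  induction w with
  | nil => simp [blocks]
  | cons a r ih =>
    cases a with
    | true => simpa [blocks] using ih
    | false =>
      intro x hx
      simp only [blocks] at hx
      rcases h : blocks r with _ | ⟨b, bs⟩
      · rw [h] at hx; simp at hx
      · rw [h] at hx
        rcases List.mem_cons.mp hx with h1 | h1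
        · omega
        · exact ih x (h ▸ List.mem_cons_of_mem _ h1)

lemma blocks_eq_nil_iff (w : List Bool) : blocks w = [] ↔ true ∉ w := by
  induction w with
  | nil => simp [blocks]
  | cons a r ih =>
    cases a with
    | true => simp [blocks]
    | false =>
      simp only [blocks, List.mem_cons]
      rcases h : blocks r with _ | ⟨b, bs⟩
      · rw [h] at ih; simp [ih.mp rfl]
      · rw [h] at ih; simp only [List.mem_cons] at *
        constructor
        · intro hh; exact absurd hh (by simp)
        · intro hh
          exact absurd (ih.mpr (fun ht => hh (Or.inr ht))) (by simp)

lemma length_blocks (w : List Bool) : (blocks w).length = w.count true := by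
  induction w with
  | nil => rfl
  | cons a r ih =>
    cases a with
    | true => simp [blocks, ih, List.count_cons]
    | false =>
      rcases h : blocks r with _ | ⟨b, bs⟩
      · have := (blocks_eq_nil_iff r).mp h
        simp [blocks, h, List.count_cons, List.count_eq_zero.mpr this]
      · rw [h] at ih
        simp only [blocks, h]
        simp_all [List.count_cons]

lemma blocks_word (l : List ℕ) (h : ∀ x ∈ l, 0 < x) : blocks (word l) = l := by
  induction l with
  | nil => rfl
  | cons b l ih =>
    have hb : 0 < b := h b (by simp)
    rw [word_cons, List.append_assoc, List.singleton_append, blocks_aux,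
      ih (fun x hx => h x (List.mem_cons_of_mem _ hx))]
    congr 1
    omega

lemma word_blocks (w : List Bool) (h : w ≠ [] → w.getLast? = some true) : word (blocks w) = w := by
  induction w with
  | nil => rfl
  | cons a r ih =>
    have hr : r ≠ [] → r.getLast? = some true := by
      intro hne
      have := h (by simp)
      cases r with
      | nil => exact absurd rfl hne
      | cons c m => rwa [List.getLast?_cons_cons] at this
    cases a with
    | true =>
      rw [blocks_true, word_cons]
      simp [ih hr]
    | false =>
      have hrne : r ≠ [] := by
        rintro rfl
        have := h (by simp)
        simp at this
      have htr : true ∈ r := by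
        have := hr hrne
        have : r.getLast hrne = true := by
          rw [List.getLast?_eq_getLast hrne] at this; exact Option.some_injective _ this
        rw [← this]; exact List.getLast_mem hrne
      obtain ⟨b, bs, hbs⟩ : ∃ b bs, blocks r = b :: bs := by
        rcases hh : blocks r with _ | ⟨b, bs⟩
        · exact absurd htr ((blocks_eq_nil_iff r).mp hh)
        · exact ⟨b, bs, rfl⟩
      have hbpos : 0 < b := blocks_pos r b (hbs ▸ by simp)
      have : blocks (false :: r) = (b+1) :: bs := by simp [blocks, hbs]
      rw [this, word_cons]
      have ihr : word (b :: bs) = r := hbs ▸ ih hr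
      rw [word_cons] at ihr
      have : (b + 1 - 1) = b := by omega
      rw [this]
      have : List.replicate b false = false :: List.replicate (b-1) false := by
        rw [← List.replicate_succ]; congr 1; omega
      rw [this]
      simp only [List.cons_append, ihr]

lemma length_word (l : List ℕ) (h : ∀ x ∈ l, 0 < x) : (word l).length = l.sum := by
  induction l with
  | nil => rfl
  | cons b l ih =>
    have hb : 0 < b := h b (by simp)
    rw [word_cons]
    simp only [List.length_append, List.sum_cons, List.length_replicate, List.length_singleton,
      ih (fun x hx => h x (List.mem_cons_of_mem _ hx))]
    omega

lemma count_word (l : List ℕ) : (word l).count true = l.length := by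
  induction l with
  | nil => rfl
  | cons b l ih =>
    rw [word_cons]
    simp [List.count_append, ih, List.count_replicate]

lemma getLast?_word (l : List ℕ) (h : l ≠ []) : (word l).getLast? = some true := by
  induction l with
  | nil => simp at h
  | cons b l ih =>
    rw [word_cons]
    rcases eq_or_ne l [] with rfl | hne
    · simp [word]
    · rw [List.getLast?_append_of_ne_nil]
      · exact ih hne
      · intro hw
        apply hne
        have : (word l).length = 0 := by rw [hw]; rfl
        cases l with
        | nil => rfl
        | cons c m => rw [word_cons] at this; simp at this

-- count = card filter
lemma count_true_eq_card (w : List Bool) :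
    w.count true = (Finset.univ.filter fun i : Fin w.length => w.get i = true).card := by
  have := Fin.card_filter_univ_eq_vector_get_eq_count true (⟨w, rfl⟩ : List.Vector Bool w.length)
  convert this.symm using 2 <;> rfl

lemma last_true {w : List Bool} (h : IsThresholdWord w) (hn : w ≠ []) :
    w.get ⟨w.length - 1, by cases w with | nil => exact absurd rfl hn | cons a r => simp⟩ = true := by
  have h1 := h hn
  rw [List.getLast?_eq_getLast_of_ne_nil hn] at h1
  have h2 := Option.some_injective _ h1
  rw [List.getLast_eq_getElem] at h2; rw [List.get_eq_getElem]; exact h2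

lemma cliqueNum_thresholdGraph (w : List Bool) (h : IsThresholdWord w) :
    cliqueNum (thresholdGraph w) = w.count true := by
  classical
  set n := w.length with hn
  set trues : Finset (Fin n) := Finset.univ.filter (fun i => w.get i = true) with htrues
  have hcard : trues.card = w.count true := (count_true_eq_card w).symm
  have hclique : (thresholdGraph w).IsNClique (w.count true) trues := by
    constructor
    · intro i hi j hj hij
      simp only [htrues, Finset.coe_filter, Set.mem_setOf_eq, Finset.mem_coe, Finset.mem_filter] at hi hj
      refine ⟨hij, ?_⟩
      rcases le_total i j with hle | hle
      · rw [min_eq_left hle]; exact hi.2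
      · rw [min_eq_right hle]; exact hj.2
    · exact hcard
  apply IsGreatest.csSup_eq
  constructor
  · exact ⟨trues, hclique⟩
  · rintro i ⟨s, hs⟩
    rcases Finset.eq_empty_or_nonempty s with rfl | hne
    · have := hs.2; simp at this; omega
    have hnn : w ≠ [] := by
      intro hw
      obtain ⟨x, hx⟩ := hne
      exact absurd x.2 (by simp [hw])
    set m := s.max' hne with hm
    have hmem : m ∈ s := s.max'_mem hne
    have herase : s.erase m ⊆ trues := by
      intro x hx
      obtain ⟨hxm, hxs⟩ := Finset.mem_erase.mp hx
      have hadj : w.get (min x m) = true := (hs.1 hxs hmem hxm).2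
      have hxlt : x < m := lt_of_le_of_ne (s.le_max' x hxs) hxm
      simp only [htrues, Finset.mem_filter, Finset.mem_univ, true_and]
      rwa [min_eq_left hxlt.le] at hadj
    by_cases hwm : w.get m = true
    · have hsub : s ⊆ trues := by
        intro x hx
        by_cases hxm : x = m
        · subst hxm
          simp only [htrues, Finset.mem_filter, Finset.mem_univ, true_and]
          exact hwm
        · exact herase (Finset.mem_erase.mpr ⟨hxm, hx⟩)
      calc i = s.card := hs.2.symm
        _ ≤ trues.card := Finset.card_le_card hsub
        _ = _ := hcard
    · set last : Fin n := ⟨n - 1, by cases w with | nil => exact absurd rfl hnn | cons a r => simp [hn]⟩ with hlast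
      have hwlast : w.get last = true := last_true h hnn
      have hmlast : m < last := by
        refine lt_of_le_of_ne ?_ ?_
        · refine Fin.le_def.mpr ?_
          show (m : ℕ) ≤ n - 1
          exact Nat.le_pred_of_lt m.isLt
        · intro he; rw [he, hwlast] at hwm; exact hwm rfl
      have hsub2 : s.erase m ⊆ trues.erase last := by
        intro x hx
        refine Finset.mem_erase.mpr ⟨?_, herase hx⟩
        obtain ⟨hxm, hxs⟩ := Finset.mem_erase.mp hx
        have : x < m := lt_of_le_of_ne (s.le_max' x hxs) hxm
        exact ne_of_lt (this.trans hmlast)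
      have hlastmem : last ∈ trues := by
        simp only [htrues, Finset.mem_filter, Finset.mem_univ, true_and]
        exact hwlast
      have h1 : (s.erase m).card ≤ trues.card - 1 := by
        calc (s.erase m).card ≤ (trues.erase last).card := Finset.card_le_card hsub2
          _ = trues.card - 1 := Finset.card_erase_of_mem hlastmem
      have h2 : s.card = (s.erase m).card + 1 := by
        rw [Finset.card_erase_of_mem hmem]
        have : 1 ≤ s.card := Finset.card_pos.mpr hne
        omega
      have h3 : 1 ≤ trues.card := Finset.card_pos.mpr ⟨last, hlastmem⟩
      have h4 := hs.2
      omega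

lemma kconnected_iff (w : List Bool) (k : ℕ) :
    KConnected (thresholdGraph w) k ↔
      (k ≤ w.length ∧
        ∀ j : Fin w.length, (j : ℕ) < k → (j : ℕ) < w.length - 1 → w.get j = true) := by
  classical
  set n := w.length with hn
  constructor
  · rintro ⟨h1, h2⟩
    rw [Fintype.card_fin] at h1
    refine ⟨h1, ?_⟩
    intro j hjk hjn
    by_contra hwj
    have hcard : (Finset.Iio j).card = (j : ℕ) := Fin.card_Iio j
    have hconn := h2 (Finset.Iio j) (by rw [hcard]; exact hjk)
    -- vertex j and vertex n-1 are in the complement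
    have hjc : (j : Fin n) ∈ (↑(Finset.Iio j) : Set (Fin n))ᶜ := by
      simp [Finset.mem_coe]
    have hlastlt : n - 1 < n := by omega
    have hlc : (⟨n - 1, hlastlt⟩ : Fin n) ∈ (↑(Finset.Iio j) : Set (Fin n))ᶜ := by
      simp only [Set.mem_compl_iff, Finset.coe_Iio, Set.mem_Iio, not_lt]
      exact le_of_lt (by rw [Fin.lt_def]; exact hjn)
    set a : ↥((↑(Finset.Iio j) : Set (Fin n))ᶜ) := ⟨j, hjc⟩ with ha
    set b : ↥((↑(Finset.Iio j) : Set (Fin n))ᶜ) := ⟨⟨n - 1, hlastlt⟩, hlc⟩ with hb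
    have hab : a ≠ b := by
      intro he
      have : (j : ℕ) = n - 1 := congrArg (fun x => ((x : ↥((↑(Finset.Iio j) : Set (Fin n))ᶜ)).1 : ℕ)) he
      omega
    have hiso : ∀ c, ¬ ((thresholdGraph w).induce ((↑(Finset.Iio j) : Set (Fin n))ᶜ)).Adj a c := by
      intro c hc
      have hadj : (thresholdGraph w).Adj j c.1 := hc
      have hcj : j ≤ c.1 := by
        have := c.2
        simp only [Set.mem_compl_iff, Finset.coe_Iio, Set.mem_Iio, not_lt] at this
        exact this
      have := hadj.2
      rw [min_eq_left hcj] at this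
      exact hwj this
    obtain ⟨p⟩ := hconn.preconnected a b
    exact hiso (p.getVert 1) (SimpleGraph.Walk.adj_snd (p := p) (SimpleGraph.Walk.not_nil_of_ne hab))
  · rintro ⟨h1, h2⟩
    refine ⟨by rwa [Fintype.card_fin], ?_⟩
    intro s hsk
    have hslt : s.card < n := lt_of_lt_of_le hsk h1
    have hne : sᶜ.Nonempty := by
      rw [← Finset.card_pos, Finset.card_compl, Fintype.card_fin]
      omega
    set m := sᶜ.min' hne with hm
    have hmc : m ∈ sᶜ := sᶜ.min'_mem hne
    have hmle : (m : ℕ) ≤ s.card := by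
      have hcardlt : s.card < n := hslt
      obtain ⟨x, hxt, hxs⟩ : ∃ x ∈ Finset.Iic (⟨s.card, hcardlt⟩ : Fin n), x ∉ s := by
        by_contra hc
        push_neg at hc
        have hsub : Finset.Iic (⟨s.card, hcardlt⟩ : Fin n) ⊆ s := hc
        have := Finset.card_le_card hsub
        rw [Fin.card_Iic] at this
        have he : ((⟨s.card, hcardlt⟩ : Fin n) : ℕ) = s.card := rfl
        omega
      have h3 : (m : ℕ) ≤ (x : ℕ) := Fin.le_def.mp (sᶜ.min'_le x (Finset.mem_compl.mpr hxs))
      have h4 : (x : ℕ) ≤ s.card := Fin.le_def.mp (Finset.mem_Iic.mp hxt)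
      omega
    have hmem : ∀ x : ↥((↑s : Set (Fin n))ᶜ), m ≤ x.1 := by
      intro x
      exact sᶜ.min'_le x.1 (Finset.mem_compl.mpr x.2)
    have hmC : (m : Fin n) ∈ ((↑s : Set (Fin n))ᶜ) := Finset.mem_compl.mp hmc
    by_cases hsing : ∀ x ∈ sᶜ, x = m
    · rw [SimpleGraph.connected_iff_exists_forall_reachable]
      refine ⟨⟨m, hmC⟩, fun u => ?_⟩
      have hu : u = ⟨m, hmC⟩ := Subtype.ext (hsing u.1 (Finset.mem_compl.mpr u.2))
      rw [hu]
    · push_neg at hsing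
      obtain ⟨m', hm'c, hm'ne⟩ := hsing
      have hmm' : m < m' := lt_of_le_of_ne (sᶜ.min'_le m' hm'c) (Ne.symm hm'ne)
      have hmtrue : w.get m = true := by
        apply h2 m (lt_of_le_of_lt hmle hsk)
        have : (m' : ℕ) ≤ n - 1 := Nat.le_pred_of_lt m'.isLt
        have := Fin.lt_def.mp hmm'
        omega
      have hub : ∀ u : ↥((↑s : Set (Fin n))ᶜ),
          ((thresholdGraph w).induce ((↑s : Set (Fin n))ᶜ)).Reachable ⟨m, hmC⟩ u := by
        intro u
        by_cases hu : u = ⟨m, hmC⟩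
        · rw [hu]
        · apply SimpleGraph.Adj.reachable
          show (thresholdGraph w).Adj m u.1
          refine ⟨fun he => hu (Subtype.ext he.symm), ?_⟩
          rw [min_eq_left (hmem u)]
          exact hmtrue
      rw [SimpleGraph.connected_iff_exists_forall_reachable]
      exact ⟨⟨m, hmC⟩, hub⟩

lemma word_replicate (k : ℕ) (l : List ℕ) :
    word (List.replicate k 1 ++ l) = List.replicate k true ++ word l := by
  induction k with
  | zero => rfl
  | succ k ih =>
    rw [List.replicate_succ, List.cons_append, word_cons, ih, List.replicate_succ]
    rfl

lemma blocks_replicate (k : ℕ) (r : List Bool) :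
    blocks (List.replicate k true ++ r) = List.replicate k 1 ++ blocks r := by
  induction k with
  | zero => rfl
  | succ k ih =>
    rw [List.replicate_succ, List.cons_append, blocks_true, ih, List.replicate_succ]
    simp

lemma length_le_sum (l : List ℕ) (h : ∀ x ∈ l, 0 < x) : l.length ≤ l.sum := by
  induction l with
  | nil => simp
  | cons b m ih =>
    simp only [List.length_cons, List.sum_cons]
    have := h b (by simp)
    have := ih (fun x hx => h x (by simp [hx]))
    omega

/-- `T ↦ b(T)` is a bijection between `k`-connected threshold
graphs on `n` vertices with clique number `d` (represented by their words) and
positive integer vectors of length `d` summing to `n` whose first `k` entries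
equal `1`. -/
theorem bVector_bijective (n d k : ℕ) :
    Set.BijOn blocks
      {w : List Bool | IsThresholdWord w ∧ w.length = n ∧
        cliqueNum (thresholdGraph w) = d ∧ KConnected (thresholdGraph w) k}
      {l : List ℕ | l.length = d ∧ (∀ x ∈ l, 0 < x) ∧
        (∀ i, i < k → l.getD i 0 = 1) ∧ l.sum = n} := by
  constructor
  · -- MapsTo
    rintro w ⟨hTW, hlen, hcl, hconn⟩
    have hpos := blocks_pos w
    have hwb : word (blocks w) = w := word_blocks w hTW
    have hsum : (blocks w).sum = w.length := by
      have := length_word (blocks w) hpos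
      rw [hwb] at this
      omega
    obtain ⟨hk, hj⟩ := (kconnected_iff w k).mp hconn
    have hall : ∀ j : Fin w.length, (j : ℕ) < k → w.get j = true := by
      intro j hjk
      by_cases hjn : (j : ℕ) < w.length - 1
      · exact hj j hjk hjn
      · have hne : w ≠ [] := by
          intro he
          exact absurd j.2 (by simp [he])
        have : (j : ℕ) = w.length - 1 := by
          have := j.isLt
          omega
        have : j = ⟨w.length - 1, by have := j.isLt; omega⟩ := Fin.ext this
        rw [this]
        exact last_true hTW hne
    have htake : List.take k w = List.replicate k true := by
      apply List.ext_getElem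
      · simp [hk]
      · intro i h1 h2
        have hik : i < k := by simpa using h2
        have hiw : i < w.length := by simp at h1; omega
        rw [List.getElem_take, List.getElem_replicate]
        exact hall ⟨i, hiw⟩ hik
    have hblocks : blocks w = List.replicate k 1 ++ blocks (List.drop k w) := by
      conv_lhs => rw [← List.take_append_drop k w, htake]
      exact blocks_replicate k _
    refine ⟨?_, hpos, ?_, by rw [hsum, hlen]⟩
    · rw [length_blocks, ← hcl, cliqueNum_thresholdGraph w hTW]
    · intro i hi
      rw [hblocks, List.getD_eq_getElem _ 0 (by simp; omega),
        List.getElem_append_left (by simp [hi]), List.getElem_replicate]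
  constructor
  · -- InjOn
    intro w1 h1 w2 h2 heq
    rw [← word_blocks w1 h1.1, ← word_blocks w2 h2.1, heq]
  · -- SurjOn
    rintro l ⟨hlen, hpos, hgetD, hsum⟩
    have hbw : blocks (word l) = l := blocks_word l hpos
    have hTW : IsThresholdWord (word l) := by
      intro hne
      apply getLast?_word
      rintro rfl
      exact hne rfl
    have hlw : (word l).length = l.sum := length_word l hpos
    have hkd : k ≤ l.length := by
      by_contra hc
      push_neg at hc
      have := hgetD l.length hc
      rw [List.getD_eq_default _ 0 (le_refl _)] at this
      exact absurd this (by omega)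
    have hdk : l.length ≤ l.sum := length_le_sum l hpos
    have htake : List.take k l = List.replicate k 1 := by
      apply List.ext_getElem
      · simp [hkd]
      · intro i h1 h2
        have hik : i < k := by simpa using h2
        have hil : i < l.length := by simp at h1; omega
        rw [List.getElem_take, List.getElem_replicate]
        have := hgetD i hik
        rwa [List.getD_eq_getElem l 0 hil] at this
    have hword : word l = List.replicate k true ++ word (List.drop k l) := by
      conv_lhs => rw [← List.take_append_drop k l, htake]
      exact word_replicate k _
    refine ⟨word l, ⟨hTW, by rw [hlw, hsum], ?_, ?_⟩, hbw⟩
    · rw [cliqueNum_thresholdGraph _ hTW, count_word, hlen]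
    · rw [kconnected_iff]
      refine ⟨by rw [hlw]; omega, ?_⟩
      intro j hjk _
      have hjlt : (j : ℕ) < (List.replicate k true).length := by simp [hjk]
      have : (word l).get j = (List.replicate k true)[(j : ℕ)]'hjlt := by
        rw [List.get_eq_getElem, List.getElem_of_eq hword j.isLt]
        exact List.getElem_append_left hjlt
      rw [this, List.getElem_replicate]
end

section
/- For any graph G, depth(𝕜[Δ(G)]) ≤ κ(G) + 1, where κ(G) is the connectivity number of G and 𝕜 is a field of characteristic zero. -/
open Finset

section Aux

variable {𝕜 : Type*} [Field 𝕜] {n : ℕ}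

instance dimFacesFinite (K : AbsCx (Fin n)) (d : ℤ) : Finite (K.dimFaces d) := by
  unfold AbsCx.dimFaces; infer_instance

instance chainsFinite (K : AbsCx (Fin n)) (d : ℤ) :
    Module.Finite 𝕜 (K.dimFaces d →₀ 𝕜) :=
  Module.Finite.finsupp

lemma sum_attach_const {α M : Type*} [AddCommMonoid M] (s : Finset α) (hs : s.card = 1)
    (g : {x // x ∈ s} → M) (m : M) (hg : ∀ v, g v = m) : ∑ v ∈ s.attach, g v = m := by
  rw [Finset.sum_congr rfl fun v _ => hg v, Finset.sum_const, Finset.card_attach, hs, one_nsmul]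

lemma sum_attach_congr {α M : Type*} [AddCommMonoid M] (s : Finset α)
    (f : {x // x ∈ s} → M) (g : α → M) (h : ∀ v : {x // x ∈ s}, f v = g v.1) :
    ∑ v ∈ s.attach, f v = ∑ x ∈ s, g x := by
  rw [Finset.sum_congr rfl fun v _ => h v]; exact Finset.sum_attach s g

lemma sign_sum_two (s : Finset (Fin n)) (hs : s.card = 2) :
    ∑ x ∈ s, ((-1 : 𝕜) ^ (s.filter (fun y => y < x)).card) = 0 := by
  obtain ⟨a, b, hab, rfl⟩ := Finset.card_eq_two.mp hs
  have key : ∀ a b : Fin n, a < b →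
      ∑ x ∈ ({a, b} : Finset (Fin n)),
        ((-1 : 𝕜) ^ (({a, b} : Finset (Fin n)).filter (fun y => y < x)).card) = 0 := by
    intro a b h
    rw [Finset.sum_pair h.ne]
    have h1 : ({a, b} : Finset (Fin n)).filter (fun y => y < a) = ∅ := by
      ext x
      simp only [Finset.mem_filter, Finset.mem_insert, Finset.mem_singleton,
        Finset.notMem_empty, iff_false, not_and]
      rintro (rfl | rfl) hlt
      · exact lt_irrefl _ hlt
      · exact absurd hlt (not_lt.mpr h.le)
    have h2 : ({a, b} : Finset (Fin n)).filter (fun y => y < b) = {a} := by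
      ext x
      simp only [Finset.mem_filter, Finset.mem_insert, Finset.mem_singleton]
      constructor
      · rintro ⟨rfl | rfl, hlt⟩
        · rfl
        · exact absurd hlt (lt_irrefl _)
      · rintro rfl; exact ⟨Or.inl rfl, h⟩
    rw [h1, h2]
    simp
  rcases hab.lt_or_gt with h | h
  · exact key a b h
  · rw [Finset.pair_comm]; exact key b a h

end Aux
section Aux2

variable {𝕜 : Type*} [Field 𝕜] {n : ℕ}

lemma bdry_single_one (K : AbsCx (Fin n)) (d : ℤ) (F : K.dimFaces d)
    (hF : F.1.card = 1) (E : K.dimFaces (d - 1)) (hE : E.1 = ∅) (c : 𝕜) :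
    chainBoundary K 𝕜 d (Finsupp.single F c) = Finsupp.single E c := by
  obtain ⟨x, hx⟩ := Finset.card_eq_one.mp hF
  simp only [chainBoundary, Finsupp.lsum_single, LinearMap.toSpanSingleton_apply]
  trans (c • Finsupp.single E (1 : 𝕜))
  · congr 1
    apply sum_attach_const F.1 hF
    intro v
    have hmem : ∀ y : Fin n, y ∈ F.1 → y = v.1 := by
      intro y hy
      have h1 : y ∈ ({x} : Finset (Fin n)) := hx ▸ hy
      have h2 : v.1 ∈ ({x} : Finset (Fin n)) := hx ▸ v.2
      rw [Finset.mem_singleton] at h1 h2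
      rw [h1, h2]
    have h1 : F.1.filter (fun y => y < v.1) = ∅ := by
      rw [Finset.filter_eq_empty_iff]
      intro y hy
      rw [hmem y hy]
      exact lt_irrefl _
    have h2 : F.1.erase v.1 = E.1 := by
      rw [hE, Finset.eq_empty_iff_forall_notMem]
      intro y hy
      exact (Finset.ne_of_mem_erase hy) (hmem y (Finset.mem_of_mem_erase hy))
    rw [h1]
    simp only [Finset.card_empty, pow_zero, one_smul]
    congr 1
    apply Subtype.ext
    rw [hE]
    ext y
    simp only [Finset.mem_erase, Finset.notMem_empty, iff_false, not_and]
    intro hne hy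
    exact hne (hmem y hy)
  · rw [Finsupp.smul_single, smul_eq_mul, mul_one]

lemma homDim_of_neg (K : AbsCx (Fin n)) (d : ℤ) (hd : d + 1 < 0) :
    AbsCx.homDim 𝕜 K d = 0 := by
  haveI : IsEmpty (K.dimFaces d) := ⟨fun F => by
    have h1 := F.2.2
    have h2 : 0 ≤ (F.1.card : ℤ) := Int.ofNat_nonneg _
    omega⟩
  haveI : Subsingleton (K.dimFaces d →₀ 𝕜) :=
    ⟨fun a b => Finsupp.ext fun x => (IsEmpty.false x).elim⟩
  rw [AbsCx.homDim]
  have h : Module.finrank 𝕜 (LinearMap.ker (chainBoundary K 𝕜 d)) = 0 := by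
    haveI : Subsingleton (LinearMap.ker (chainBoundary K 𝕜 d)) := inferInstance
    exact Module.finrank_zero_of_subsingleton
  omega

end Aux2
section Aux3

variable {𝕜 : Type*} [Field 𝕜] {n : ℕ}

lemma chainBoundary_single_eq (K : AbsCx (Fin n)) (d : ℤ) (F : K.dimFaces d) (c : 𝕜) :
    chainBoundary K 𝕜 d (Finsupp.single F c) =
      c • ∑ v ∈ F.1.attach,
        ((-1 : 𝕜) ^ (F.1.filter (fun y => y < v.1)).card) •
          Finsupp.single
            (⟨F.1.erase v.1, K.down_closed F.2.1 (Finset.erase_subset _ _),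
              by
                have h2 : 1 ≤ F.1.card := Finset.card_pos.mpr ⟨v.1, v.2⟩
                rw [Finset.card_erase_of_mem v.2, Nat.cast_sub h2]
                have := F.2.2
                omega⟩ :
              K.dimFaces (d - 1)) (1 : 𝕜) := by
  simp only [chainBoundary, Finsupp.lsum_single, LinearMap.toSpanSingleton_apply]
  congr! 1

end Aux3
section Aux4

variable {𝕜 : Type*} [Field 𝕜] {n : ℕ}

open Classical in
/-- Indicator of reachability from `u` in the induced graph on `W`. -/
noncomputable def vertFun (G : SimpleGraph (Fin n)) (W : Set (Fin n)) (u : Fin n)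
    (hu : u ∈ W) (𝕜 : Type*) [Field 𝕜] (x : Fin n) : 𝕜 :=
  if ∃ hx : x ∈ W, (G.induce W).Reachable ⟨u, hu⟩ ⟨x, hx⟩ then 1 else 0

lemma vertFun_eq_one {G : SimpleGraph (Fin n)} {W : Set (Fin n)} {u : Fin n}
    {hu : u ∈ W} {x : Fin n} (hx : x ∈ W)
    (hr : (G.induce W).Reachable ⟨u, hu⟩ ⟨x, hx⟩) : vertFun G W u hu 𝕜 x = 1 :=
  if_pos ⟨hx, hr⟩

lemma vertFun_eq_zero {G : SimpleGraph (Fin n)} {W : Set (Fin n)} {u : Fin n}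
    {hu : u ∈ W} {x : Fin n}
    (h : ∀ hx : x ∈ W, ¬ (G.induce W).Reachable ⟨u, hu⟩ ⟨x, hx⟩) :
    vertFun G W u hu 𝕜 x = 0 :=
  if_neg (fun ⟨hx, hr⟩ => h hx hr)

lemma vertFun_adj {G : SimpleGraph (Fin n)} {W : Set (Fin n)} {u : Fin n}
    {hu : u ∈ W} {a b : Fin n} (ha : a ∈ W) (hb : b ∈ W) (hadj : G.Adj a b) :
    vertFun G W u hu 𝕜 a = vertFun G W u hu 𝕜 b := by
  have hadj' : (G.induce W).Adj ⟨a, ha⟩ ⟨b, hb⟩ := by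
    simp only [SimpleGraph.comap_adj, Function.Embedding.coe_subtype]
    exact hadj
  unfold vertFun
  congr 1
  apply propext
  constructor
  · rintro ⟨ha', hr⟩
    exact ⟨hb, hr.trans hadj'.reachable⟩
  · rintro ⟨hb', hr⟩
    exact ⟨ha, hr.trans hadj'.symm.reachable⟩

end Aux4
section Aux5

variable {𝕜 : Type*} [Field 𝕜] {n : ℕ}

lemma card_two_of_dimFaces_one (K : AbsCx (Fin n)) (F : K.dimFaces ((0:ℤ)+1)) :
    F.1.card = 2 := by
  have := F.2.2; omega

lemma bdry_bdry (K : AbsCx (Fin n)) (hempty : (∅ : Finset (Fin n)) ∈ K.faces)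
    (y : K.dimFaces ((0:ℤ)+1) →₀ 𝕜) :
    chainBoundary K 𝕜 0 (chainBoundary K 𝕜 ((0:ℤ)+1) y) = 0 := by
  obtain ⟨E, hE⟩ : ∃ E : K.dimFaces ((0:ℤ)-1), E.1 = (∅ : Finset (Fin n)) :=
    ⟨⟨∅, hempty, by norm_num⟩, rfl⟩
  induction y using Finsupp.induction_linear with
  | zero => simp
  | add f g hf hg => rw [map_add, map_add, hf, hg, add_zero]
  | single F c =>
    have hcard2 : F.1.card = 2 := card_two_of_dimFaces_one K F
    rw [chainBoundary_single_eq]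
    erw [map_smul, map_sum]
    have hstep : ∀ v : {x // x ∈ F.1},
        chainBoundary K 𝕜 0
          (Finsupp.single
            (⟨F.1.erase v.1, K.down_closed F.2.1 (Finset.erase_subset _ _),
              by
                have h2 : 1 ≤ F.1.card := Finset.card_pos.mpr ⟨v.1, v.2⟩
                rw [Finset.card_erase_of_mem v.2, Nat.cast_sub h2]
                have := F.2.2
                omega⟩ :
              K.dimFaces ((0:ℤ)+1-1)) (1 : 𝕜)) = Finsupp.single E 1 := by
      intro v
      exact bdry_single_one K 0 _
        (show (F.1.erase v.1).card = 1 by rw [Finset.card_erase_of_mem v.2, hcard2]) E hE 1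
    erw [Finset.sum_congr rfl fun v _ => (map_smul (chainBoundary K 𝕜 0) _ _).trans (congrArg (fun x => ((-1 : 𝕜) ^ (F.1.filter (fun y => y < v.1)).card) • x) (hstep v))]
    rw [Finset.sum_attach F.1
      (fun x => ((-1 : 𝕜) ^ (F.1.filter (fun y => y < x)).card) • Finsupp.single E (1 : 𝕜)),
      ← Finset.sum_smul, sign_sum_two F.1 hcard2, zero_smul, smul_zero]

lemma phi_bdry (K : AbsCx (Fin n)) (f : Fin n → 𝕜)
    (hf : ∀ s ∈ K.faces, ∀ a ∈ s, ∀ b ∈ s, f a = f b)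
    (y : K.dimFaces ((0:ℤ)+1) →₀ 𝕜) :
    Finsupp.linearCombination 𝕜 (fun F : K.dimFaces (0:ℤ) => ∑ x ∈ F.1, f x)
      (chainBoundary K 𝕜 ((0:ℤ)+1) y) = 0 := by
  induction y using Finsupp.induction_linear with
  | zero => simp
  | add g h hg hh => rw [map_add, map_add, hg, hh, add_zero]
  | single F c =>
    have hcard2 : F.1.card = 2 := card_two_of_dimFaces_one K F
    obtain ⟨a, b, hab, hFab⟩ := Finset.card_eq_two.mp hcard2
    have ha : a ∈ F.1 := by rw [hFab]; simp
    have hb : b ∈ F.1 := by rw [hFab]; simp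
    have hvf : f a = f b := hf F.1 F.2.1 a ha b hb
    have hea : F.1.erase a = {b} := by
      rw [hFab]; exact Finset.erase_insert (by simp [hab])
    have heb : F.1.erase b = {a} := by
      rw [hFab, Finset.pair_comm]; exact Finset.erase_insert (by simp [hab.symm])
    rw [chainBoundary_single_eq]
    erw [map_smul, map_sum]
    have hinner : ∀ v : {x // x ∈ F.1},
        ∑ y ∈ F.1.erase v.1, f y = f b := by
      intro v
      have hv : v.1 = a ∨ v.1 = b := by
        have h' : (v.1 : Fin n) ∈ ({a, b} : Finset (Fin n)) := by
          rw [← hFab]; exact v.2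
        simpa using h'
      rcases hv with h | h
      · rw [h, hea, Finset.sum_singleton]
      · rw [h, heb, Finset.sum_singleton, hvf]
    erw [Finset.sum_congr rfl fun v _ => (map_smul (Finsupp.linearCombination 𝕜 (fun F : K.dimFaces (0:ℤ) => ∑ x ∈ F.1, f x)) _ _).trans (congrArg (fun x => ((-1 : 𝕜) ^ (F.1.filter (fun y => y < v.1)).card) • x) ((Finsupp.linearCombination_single 𝕜 (v := fun F : K.dimFaces (0:ℤ) => ∑ x ∈ F.1, f x) _ _).trans ((one_smul _ _).trans (hinner v))))]
    rw [Finset.sum_attach F.1 (fun x => ((-1 : 𝕜) ^ (F.1.filter (fun y => y < x)).card) • f b),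
      ← Finset.sum_smul, sign_sum_two F.1 hcard2, zero_smul, smul_zero]

end Aux5
section Aux6

lemma homDim_pos_of_disconnected (𝕜 : Type*) [Field 𝕜] {n : ℕ} (G : SimpleGraph (Fin n))
    (W : Set (Fin n)) (u v : Fin n) (hu : u ∈ W) (hv : v ∈ W)
    (hnr : ¬ (G.induce W).Reachable ⟨u, hu⟩ ⟨v, hv⟩) :
    1 ≤ AbsCx.homDim 𝕜 ((cliqueComplex G).restrict W) 0 := by
  set K := (cliqueComplex G).restrict W with hKdef
  have hface : ∀ x : Fin n, x ∈ W → ({x} : Finset (Fin n)) ∈ K.faces := by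
    intro x hx
    constructor
    · show G.IsClique (↑({x} : Finset (Fin n)) : Set (Fin n))
      rw [Finset.coe_singleton]
      exact G.isClique_singleton x
    · intro y hy
      have hyx : y = x := by simpa using hy
      rwa [hyx]
  have hempty : (∅ : Finset (Fin n)) ∈ K.faces := by
    constructor
    · show G.IsClique (↑(∅ : Finset (Fin n)) : Set (Fin n))
      simp
    · simp
  obtain ⟨E, hE⟩ : ∃ E : K.dimFaces ((0:ℤ)-1), E.1 = (∅ : Finset (Fin n)) :=
    ⟨⟨∅, hempty, by norm_num⟩, rfl⟩
  obtain ⟨Fu, hFu⟩ : ∃ F : K.dimFaces (0:ℤ), F.1 = ({u} : Finset (Fin n)) :=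
    ⟨⟨{u}, hface u hu, by norm_num⟩, rfl⟩
  obtain ⟨Fv, hFv⟩ : ∃ F : K.dimFaces (0:ℤ), F.1 = ({v} : Finset (Fin n)) :=
    ⟨⟨{v}, hface v hv, by norm_num⟩, rfl⟩
  set ζ : K.dimFaces (0:ℤ) →₀ 𝕜 := Finsupp.single Fu 1 - Finsupp.single Fv 1 with hζ
  have hζker : ζ ∈ LinearMap.ker (chainBoundary K 𝕜 0) := by
    rw [LinearMap.mem_ker, hζ, map_sub,
      bdry_single_one K 0 Fu (by rw [hFu]; simp) E hE,
      bdry_single_one K 0 Fv (by rw [hFv]; simp) E hE, sub_self]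
  have hle : LinearMap.range (chainBoundary K 𝕜 ((0:ℤ)+1)) ≤
      LinearMap.ker (chainBoundary K 𝕜 0) := by
    rintro x ⟨y, rfl⟩
    exact bdry_bdry K hempty y
  have hζnot : ¬ @Membership.mem (K.dimFaces ((0:ℤ)+1-1) →₀ 𝕜) _ _
      (LinearMap.range (chainBoundary K 𝕜 ((0:ℤ)+1))) ζ := by
    rintro ⟨y, hy⟩
    have hf : ∀ s ∈ K.faces, ∀ a ∈ s, ∀ b ∈ s,
        vertFun G W u hu 𝕜 a = vertFun G W u hu 𝕜 b := by
      intro s hs a hain b hbin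
      by_cases hab : a = b
      · rw [hab]
      · exact vertFun_adj (hs.2 (Finset.mem_coe.mpr hain)) (hs.2 (Finset.mem_coe.mpr hbin))
          (hs.1 (Finset.mem_coe.mpr hain) (Finset.mem_coe.mpr hbin) hab)
    have h0 := phi_bdry K (vertFun G W u hu 𝕜) hf y
    rw [hy, hζ, map_sub, Finsupp.linearCombination_single, Finsupp.linearCombination_single,
      one_smul, one_smul, hFu, hFv, Finset.sum_singleton, Finset.sum_singleton,
      vertFun_eq_one hu (SimpleGraph.Reachable.refl _),
      vertFun_eq_zero (fun hx hr => hnr hr), sub_zero] at h0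
    exact one_ne_zero h0
  have hlt : LinearMap.range (chainBoundary K 𝕜 ((0:ℤ)+1)) <
      LinearMap.ker (chainBoundary K 𝕜 0) :=
    hle.lt_of_ne (fun h => hζnot (h.symm ▸ hζker))
  haveI : Module.Finite 𝕜 (K.dimFaces (0:ℤ) →₀ 𝕜) := chainsFinite K 0
  have hrk : Module.finrank 𝕜 (LinearMap.range (chainBoundary K 𝕜 ((0:ℤ)+1))) <
      Module.finrank 𝕜 (LinearMap.ker (chainBoundary K 𝕜 0)) :=
    Submodule.finrank_lt_finrank_of_lt hlt
  rw [AbsCx.homDim]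
  omega

end Aux6
/-- `depth 𝕜[Δ(G)] ≤ κ(G) + 1`. -/
theorem srDepth_le_connectivity (𝕜 : Type*) [Field 𝕜] [CharZero 𝕜] {n : ℕ}
    (G : SimpleGraph (Fin n)) :
    srDepth 𝕜 (cliqueComplex G) ≤ connectivityNum G + 1 := by
  classical
  have hdepth_le : srDepth 𝕜 (cliqueComplex G) ≤ n := Nat.sub_le _ _
  by_cases hn : n ≤ connectivityNum G + 1
  · exact le_trans hdepth_le hn
  push_neg at hn
  have hbddK : BddAbove {k : ℕ | KConnected G k} :=
    ⟨Fintype.card (Fin n), fun k hk => hk.1⟩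
  have hnotconn : ¬ KConnected G (connectivityNum G + 1) := by
    intro h
    have h2 : connectivityNum G + 1 ≤ connectivityNum G := le_csSup hbddK h
    omega
  rw [KConnected] at hnotconn
  push_neg at hnotconn
  have hcard : connectivityNum G + 1 ≤ Fintype.card (Fin n) := by
    rw [Fintype.card_fin]; omega
  obtain ⟨s, hslt, hsdisc⟩ := hnotconn hcard
  have hscard : s.card ≤ connectivityNum G := by omega
  rw [SimpleGraph.connected_iff] at hsdisc
  push_neg at hsdisc
  have hWne : Nonempty ((↑s : Set (Fin n))ᶜ : Set (Fin n)) := by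
    have hex : ∃ x : Fin n, x ∉ s := by
      by_contra hall
      push_neg at hall
      have huniv : (Finset.univ : Finset (Fin n)) ⊆ s := fun x _ => hall x
      have := Finset.card_le_card huniv
      rw [Finset.card_univ, Fintype.card_fin] at this
      omega
    obtain ⟨x, hx⟩ := hex
    exact ⟨⟨x, by simpa using hx⟩⟩
  have hnpre : ¬ (G.induce ((↑s : Set (Fin n))ᶜ)).Preconnected := fun hp => @IsEmpty.false _ (hsdisc hp) hWne.some
  rw [SimpleGraph.Preconnected] at hnpre
  push_neg at hnpre
  obtain ⟨a, b, hnr⟩ := hnpre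
  -- the disconnected induced subcomplex gives a nonzero Betti number
  have hhom : 1 ≤ AbsCx.homDim 𝕜
      ((cliqueComplex G).restrict (↑(sᶜ : Finset (Fin n)) : Set (Fin n))) 0 := by
    rw [Finset.coe_compl]
    exact homDim_pos_of_disconnected 𝕜 G _ a.1 b.1 a.2 b.2 hnr
  have hj : (sᶜ : Finset (Fin n)).card = n - s.card := by
    rw [Finset.card_compl, Fintype.card_fin]
  have hj1 : 1 ≤ (sᶜ : Finset (Fin n)).card := by omega
  have hbetti : srBetti 𝕜 (cliqueComplex G)
      ((sᶜ : Finset (Fin n)).card - 1) (sᶜ : Finset (Fin n)).card ≠ 0 := by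
    intro h0
    rw [srBetti] at h0
    have hmem : (sᶜ : Finset (Fin n)) ∈
        Finset.powersetCard (sᶜ : Finset (Fin n)).card (Finset.univ : Finset (Fin n)) :=
      Finset.mem_powersetCard.mpr ⟨Finset.subset_univ _, rfl⟩
    have hterm := (Finset.sum_eq_zero_iff.mp h0) _ hmem
    rw [show (((sᶜ : Finset (Fin n)).card : ℤ) - ((sᶜ : Finset (Fin n)).card - 1 : ℕ) - 1) = 0
      from by omega] at hterm
    omega
  have hbddB : BddAbove {i : ℕ | ∃ j : ℕ, srBetti 𝕜 (cliqueComplex G) i j ≠ 0} := by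
    refine ⟨n, fun i hi => ?_⟩
    obtain ⟨j', hij⟩ := hi
    by_contra hni
    push_neg at hni
    apply hij
    rw [srBetti]
    apply Finset.sum_eq_zero
    intro W' hW'
    have hW'card : W'.card = j' := (Finset.mem_powersetCard.mp hW').2
    have hW'le : W'.card ≤ n := by
      have := Finset.card_le_card (Finset.subset_univ W')
      rwa [Finset.card_univ, Fintype.card_fin] at this
    apply homDim_of_neg
    omega
  have hproj : (sᶜ : Finset (Fin n)).card - 1 ≤ srProjDim 𝕜 (cliqueComplex G) :=
    le_csSup hbddB ⟨(sᶜ : Finset (Fin n)).card, hbetti⟩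
  rw [srDepth]
  omega
end

section
/- A shifted simplicial complex is flag if and only if it is the clique complex of a threshold graph. -/
open Finset

/-! ### Auxiliary material for the proof -/

lemma AbsCx.ext' {V : Type*} {K L : AbsCx V} (h : K.faces = L.faces) : K = L := by
  cases K; cases L; cases h; rfl

lemma thresholdGraph_adj (w : List Bool) (i j : Fin w.length) :
    (thresholdGraph w).Adj i j ↔ i ≠ j ∧ w.get (min i j) = true := Iff.rfl

lemma fin_min_succ {m : ℕ} (x y : Fin m) : min x.succ y.succ = (min x y).succ := by
  rcases le_total x y with h | h
  · rw [min_eq_left h, min_eq_left (Fin.succ_le_succ_iff.mpr h)]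
  · rw [min_eq_right h, min_eq_right (Fin.succ_le_succ_iff.mpr h)]

/-- Restriction of a graph on `Fin (n+1)` to the last `n` vertices. -/
def graphRestrictSucc {n : ℕ} (G : SimpleGraph (Fin (n + 1))) : SimpleGraph (Fin n) :=
  ⟨fun a b => G.Adj a.succ b.succ, ⟨fun _ _ h => G.adj_symm h⟩, ⟨fun _ h => G.irrefl h⟩⟩

/-- Restriction of a graph on `Fin (n+1)` to the first `n` vertices. -/
def graphRestrictCast {n : ℕ} (G : SimpleGraph (Fin (n + 1))) : SimpleGraph (Fin n) :=
  ⟨fun a b => G.Adj a.castSucc b.castSucc, ⟨fun _ _ h => G.adj_symm h⟩, ⟨fun _ h => G.irrefl h⟩⟩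

/-- Every "shifted" graph on `Fin n` is a threshold graph. -/
lemma exists_threshold_word : ∀ (n : ℕ) (G : SimpleGraph (Fin n)),
    (∀ i j k : Fin n, G.Adj i j → k < j → k ≠ i → G.Adj i k) →
    ∃ w : List Bool, w.length = n ∧ IsThresholdWord w ∧
      Nonempty (G ≃g thresholdGraph w) := by
  intro n
  induction n with
  | zero =>
    intro G _
    exact ⟨[], rfl, fun h => absurd rfl h, ⟨⟨Equiv.refl _, fun {a b} => a.elim0⟩⟩⟩
  | succ n IH =>
    intro G hs
    by_cases hdom : ∃ i, G.Adj i (Fin.last n)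
    · -- vertex 0 is dominating
      obtain ⟨i, hi⟩ := hdom
      have hlast0 : (Fin.last n) ≠ 0 := by
        intro h
        have hn : n = 0 := by
          by_contra hn
          exact absurd h (Fin.ext_iff.not.mpr (by simpa using hn))
        subst hn
        exact hi.ne ((Fin.eq_zero i).trans (Fin.eq_zero (Fin.last 0)).symm)
      have h0last : G.Adj 0 (Fin.last n) := by
        rcases eq_or_ne i 0 with rfl | h0
        · exact hi
        · exact (hs (Fin.last n) i 0 hi.symm (Fin.pos_of_ne_zero h0)
            (Ne.symm hlast0)).symm
      have hdom0 : ∀ j : Fin (n + 1), j ≠ 0 → G.Adj 0 j := by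
        intro j hj
        rcases eq_or_ne j (Fin.last n) with rfl | hjl
        · exact h0last
        · exact hs 0 (Fin.last n) j h0last (lt_of_le_of_ne (Fin.le_last j) hjl) hj
      have hs' : ∀ i j k : Fin n, (graphRestrictSucc G).Adj i j → k < j → k ≠ i →
          (graphRestrictSucc G).Adj i k := fun i j k h hk hne =>
        hs i.succ j.succ k.succ h (Fin.succ_lt_succ_iff.mpr hk)
          (fun hc => hne (Fin.succ_inj.mp hc))
      obtain ⟨w', hlen, hword, ⟨φ⟩⟩ := IH (graphRestrictSucc G) hs'
      subst hlen
      refine ⟨true :: w', rfl, ?_, ⟨?_⟩⟩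
      · intro _
        cases w' with
        | nil => rfl
        | cons c t => exact (List.getLast?_cons_cons).trans (hword (List.cons_ne_nil c t))
      · refine ⟨⟨Fin.cases (0 : Fin (w'.length + 1)) (fun i => (φ i).succ),
          Fin.cases (0 : Fin (w'.length + 1)) (fun i => (φ.symm i).succ),
          ?_, ?_⟩, ?_⟩
        · intro x
          induction x using Fin.cases with
          | zero => simp
          | succ i => simp
        · intro x
          induction x using Fin.cases with
          | zero => simp
          | succ i => simp
        · intro a b
          induction a using Fin.cases with
          | zero =>
            induction b using Fin.cases with
            | zero =>
              simp only [Equiv.coe_fn_mk, Fin.cases_zero]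
              exact iff_of_false (fun h => h.1 rfl) G.irrefl
            | succ j =>
              simp only [Equiv.coe_fn_mk, Fin.cases_zero, Fin.cases_succ]
              refine iff_of_true ?_ (hdom0 j.succ (Fin.succ_ne_zero j))
              refine ⟨(Fin.succ_ne_zero _).symm, ?_⟩
              rw [inf_eq_left.mpr (Fin.zero_le _)]
              simp
          | succ i =>
            induction b using Fin.cases with
            | zero =>
              simp only [Equiv.coe_fn_mk, Fin.cases_zero, Fin.cases_succ]
              refine iff_of_true ?_ (hdom0 i.succ (Fin.succ_ne_zero i)).symm
              refine ⟨Fin.succ_ne_zero _, ?_⟩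
              rw [inf_eq_right.mpr (Fin.zero_le _)]
              simp
            | succ j =>
              simp only [Equiv.coe_fn_mk, Fin.cases_succ]
              rw [thresholdGraph_adj, fin_min_succ]
              have hget : (true :: w').get ((min (φ i) (φ j)).succ)
                  = w'.get (min (φ i) (φ j)) := by simp
              rw [hget, ne_eq, Fin.succ_inj]
              exact φ.map_rel_iff
    · -- the last vertex is isolated
      push_neg at hdom
      have hs'' : ∀ i j k : Fin n, (graphRestrictCast G).Adj i j → k < j → k ≠ i →
          (graphRestrictCast G).Adj i k := fun i j k h hk hne =>
        hs i.castSucc j.castSucc k.castSucc h (Fin.castSucc_lt_castSucc_iff.mpr hk)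
          (fun hc => hne (Fin.castSucc_inj.mp hc))
      obtain ⟨w'', hlen, hword, ⟨φ⟩⟩ := IH (graphRestrictCast G) hs''
      subst hlen
      cases w'' with
      | nil =>
        refine ⟨[true], rfl, fun _ => rfl, ⟨⟨Equiv.refl _, ?_⟩⟩⟩
        intro a b
        have hab : a = b := (Fin.eq_zero a).trans (Fin.eq_zero b).symm
        exact iff_of_false (fun h => h.1 (congrArg _ hab)) (fun h => h.ne hab)
      | cons c t =>
        refine ⟨false :: c :: t, rfl, ?_, ⟨?_⟩⟩
        · intro _
          rw [List.getLast?_cons_cons]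
          exact hword (List.cons_ne_nil c t)
        · refine ⟨⟨Fin.lastCases (0 : Fin ((c :: t).length + 1)) (fun i => (φ i).succ),
            Fin.cases (Fin.last _) (fun i => (φ.symm i).castSucc), ?_, ?_⟩, ?_⟩
          · intro x
            induction x using Fin.lastCases with
            | last => simp
            | cast i => simp
          · intro x
            induction x using Fin.cases with
            | zero => simp
            | succ j =>
              simp only [Fin.cases_succ, Fin.lastCases_castSucc]
              exact congrArg Fin.succ (φ.apply_symm_apply j)
          · intro a b
            induction a using Fin.lastCases with
            | last =>
              induction b using Fin.lastCases with
              | last =>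
                simp only [Equiv.coe_fn_mk, Fin.lastCases_last]
                exact iff_of_false (fun h => h.1 rfl) G.irrefl
              | cast j =>
                simp only [Equiv.coe_fn_mk, Fin.lastCases_last, Fin.lastCases_castSucc]
                refine iff_of_false ?_ (fun h => hdom _ h.symm)
                rintro ⟨-, h⟩
                rw [inf_eq_left.mpr (Fin.zero_le _)] at h
                simp at h
            | cast i =>
              induction b using Fin.lastCases with
              | last =>
                simp only [Equiv.coe_fn_mk, Fin.lastCases_last, Fin.lastCases_castSucc]
                refine iff_of_false ?_ (fun h => hdom _ h)
                rintro ⟨-, h⟩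
                rw [inf_eq_right.mpr (Fin.zero_le _)] at h
                simp at h
              | cast j =>
                simp only [Equiv.coe_fn_mk, Fin.lastCases_castSucc]
                rw [thresholdGraph_adj, fin_min_succ]
                have hget : (false :: c :: t).get ((min (φ i) (φ j)).succ)
                    = (c :: t).get (min (φ i) (φ j)) := by simp
                rw [hget, ne_eq, Fin.succ_inj]
                exact φ.map_rel_iff

/-- a shifted complex is flag iff it is the clique complex of a
threshold graph. -/
theorem shifted_flag_iff_threshold {n : ℕ} (Γ : AbsCx (Fin n))
    (hsh : Γ.IsShifted) :
    Γ.IsFlag ↔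
      ∃ G : SimpleGraph (Fin n), IsThresholdGraph G ∧ Γ = cliqueComplex G := by
  constructor
  · intro hflag
    -- the 1-skeleton graph of `Γ`
    set G : SimpleGraph (Fin n) :=
      ⟨fun a b => a ≠ b ∧ ({a, b} : Finset (Fin n)) ∈ Γ.faces,
       ⟨fun a b h => ⟨h.1.symm, by rw [Finset.pair_comm]; exact h.2⟩⟩,
       ⟨fun a h => h.1 rfl⟩⟩ with hG
    -- every clique of `G` is a face of `Γ`
    have hcf : ∀ s : Finset (Fin n), G.IsClique (↑s : Set (Fin n)) → s ∈ Γ.faces := by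
      intro s
      induction s using Finset.strongInduction with
      | _ s ih =>
        intro hcl
        by_contra hns
        have h2 := hflag s hns (fun t ht => ih t ht (hcl.subset (Finset.coe_subset.mpr ht.subset)))
        obtain ⟨a, b, hab, rfl⟩ := Finset.card_eq_two.mp h2
        have hadj : G.Adj a b := hcl (by simp) (by simp) hab
        exact hns hadj.2
    -- every face of `Γ` is a clique of `G`
    have hfc : ∀ s : Finset (Fin n), s ∈ Γ.faces → G.IsClique (↑s : Set (Fin n)) := by
      intro s hsF a ha b hb hne
      refine ⟨hne, Γ.down_closed hsF ?_⟩
      exact Finset.insert_subset (Finset.mem_coe.mp ha)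
        (Finset.singleton_subset_iff.mpr (Finset.mem_coe.mp hb))
    refine ⟨G, ?_, ?_⟩
    · -- `G` is a threshold graph, via shiftedness
      have hshift : ∀ i j k : Fin n, G.Adj i j → k < j → k ≠ i → G.Adj i k := by
        intro i j k hij hkj hki
        have hkj' : k ≠ j := ne_of_lt hkj
        have hkm : k ∉ ({i, j} : Finset (Fin n)) := by simp [hki, hkj']
        have hjm : j ∈ ({i, j} : Finset (Fin n)) := by simp
        have := hsh _ hij.2 j hjm k hkm hkj
        have herase : ({i, j} : Finset (Fin n)).erase j = {i} := by
          rw [Finset.pair_comm, Finset.erase_insert (by simp [hij.1.symm])]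
        rw [herase] at this
        refine ⟨hki.symm, ?_⟩
        rwa [Finset.pair_comm]
      obtain ⟨w, -, hword, hiso⟩ := exists_threshold_word n G hshift
      exact ⟨w, hword, hiso⟩
    · refine AbsCx.ext' (Set.ext fun s => ⟨hfc s, hcf s⟩)
  · rintro ⟨G, -, rfl⟩
    intro s hns hmin
    have hncl : ¬ G.IsClique (↑s : Set (Fin n)) := hns
    rw [SimpleGraph.isClique_iff, Set.Pairwise] at hncl
    push_neg at hncl
    obtain ⟨a, ha, b, hb, hne, hnadj⟩ := hncl
    have hsub : ({a, b} : Finset (Fin n)) ⊆ s :=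
      Finset.insert_subset (Finset.mem_coe.mp ha)
        (Finset.singleton_subset_iff.mpr (Finset.mem_coe.mp hb))
    rcases eq_or_ne ({a, b} : Finset (Fin n)) s with heq | hne2
    · rw [← heq]
      exact Finset.card_pair hne
    · exfalso
      have hface : ({a, b} : Finset (Fin n)) ∈ (cliqueComplex G).faces :=
        hmin _ (Finset.ssubset_iff_subset_ne.mpr ⟨hsub, hne2⟩)
      exact hnadj (hface (by simp) (by simp) hne)
end

section
/- If the Stanley–Reisner ring 𝕜[Δ(G)] of the clique complex of a graph G on n vertices has projective dimension p over 𝕜[x_1,…,x_n], then G is (n−p−1)-connected. -/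
open Finset

section Aux

open Finsupp Module

lemma erase_instIrrel {α : Type*} (D1 D2 : DecidableEq α) (s : Finset α) (a : α) :
    @Finset.erase α D1 s a = @Finset.erase α D2 s a := by congr!

lemma chainBoundary_single {V : Type*} [LinearOrder V] (K : AbsCx V)
    (𝕜 : Type*) [Field 𝕜] (d : ℤ) (F : K.dimFaces d)
    (g : V → (K.dimFaces (d - 1) →₀ 𝕜))
    (hg : ∀ (a : V) (h : a ∈ F.1),
      g a = Finsupp.single
        (⟨F.1.erase a, K.down_closed F.2.1 (Finset.erase_subset _ _), by
          obtain ⟨hf, hc⟩ := F.2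
          have h1 : 1 ≤ F.1.card := Finset.card_pos.mpr ⟨a, h⟩
          rw [Finset.card_erase_of_mem h, Nat.cast_sub h1]
          omega⟩ : K.dimFaces (d - 1)) (1 : 𝕜)) :
    chainBoundary K 𝕜 d (Finsupp.single F 1) =
      ∑ v ∈ F.1, ((-1 : 𝕜) ^ (F.1.filter (fun x => x < v)).card) • g v := by
  rw [chainBoundary, Finsupp.lsum_single, LinearMap.toSpanSingleton_apply, one_smul]
  rw [← Finset.sum_attach F.1
    (fun v => ((-1 : 𝕜) ^ (F.1.filter (fun x => x < v)).card) • g v)]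
  refine Finset.sum_congr rfl fun v _ => ?_
  rw [hg v.1 v.2]
  rfl

/-- auxiliary linear functional weighting each face by the sum of `w` over it -/
noncomputable def auxPhi {𝕜 : Type*} [Field 𝕜] {V : Type*} (K : AbsCx V)
    (w : V → 𝕜) (d : ℤ) : (K.dimFaces d →₀ 𝕜) →ₗ[𝕜] 𝕜 :=
  Finsupp.lsum 𝕜 fun F => LinearMap.toSpanSingleton 𝕜 𝕜 (∑ x ∈ F.1, w x)

lemma auxPhi_single {𝕜 : Type*} [Field 𝕜] {V : Type*} (K : AbsCx V)
    (w : V → 𝕜) (d : ℤ) (F : K.dimFaces d) :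
    auxPhi K w d (Finsupp.single F 1) = ∑ x ∈ F.1, w x := by
  rw [auxPhi, Finsupp.lsum_single, LinearMap.toSpanSingleton_apply, one_smul]

lemma homDim_eq_zero_of_lt {V : Type*} [LinearOrder V] (𝕜 : Type*) [Field 𝕜]
    (K : AbsCx V) (d : ℤ) (hd : d < -1) : AbsCx.homDim 𝕜 K d = 0 := by
  haveI : IsEmpty (K.dimFaces d) := ⟨fun F => by
    have h1 := F.2.2
    have h2 : (0 : ℤ) ≤ (F.1.card : ℤ) := Int.natCast_nonneg _
    omega⟩
  haveI : Subsingleton (K.dimFaces d →₀ 𝕜) :=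
    ⟨fun f g => Finsupp.ext fun a => (IsEmpty.false a).elim⟩
  unfold AbsCx.homDim
  rw [Module.finrank_zero_of_subsingleton (M := ↥(LinearMap.ker (chainBoundary K 𝕜 d)))]
  exact Nat.zero_sub _

lemma srBetti_bdd {𝕜 : Type*} [Field 𝕜] {n : ℕ} (K : AbsCx (Fin n)) :
    ∀ i ∈ {i : ℕ | ∃ j, srBetti 𝕜 K i j ≠ 0}, i ≤ n := by
  rintro i ⟨j, hij⟩
  unfold srBetti at hij
  obtain ⟨Wf, hWm, hW⟩ := Finset.exists_ne_zero_of_sum_ne_zero hij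
  have hjcard : Wf.card = j := Finset.mem_powersetCard_univ.mp hWm
  have hjn : j ≤ n := by
    rw [← hjcard]
    simpa using Finset.card_le_univ Wf
  by_contra hin
  push_neg at hin
  have hd : ((j : ℤ) - i - 1) < -1 := by omega
  exact hW (homDim_eq_zero_of_lt 𝕜 _ _ hd)

set_option synthInstance.maxHeartbeats 1000000 in
set_option maxHeartbeats 1000000 in
lemma key_homDim {𝕜 : Type*} [Field 𝕜] {n : ℕ} (G : SimpleGraph (Fin n))
    (W : Finset (Fin n)) (u v : Fin n) (hu : u ∈ W) (hv : v ∈ W)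
    (hreach : ¬ (G.induce (↑W : Set (Fin n))).Reachable
      ⟨u, Finset.mem_coe.mpr hu⟩ ⟨v, Finset.mem_coe.mpr hv⟩) :
    AbsCx.homDim 𝕜 ((cliqueComplex G).restrict (↑W : Set (Fin n))) 0 ≠ 0 := by
  classical
  set K := (cliqueComplex G).restrict (↑W : Set (Fin n)) with hK
  -- the reachability set and indicator weight
  set R : Set (Fin n) := {x | ∃ hx : x ∈ (↑W : Set (Fin n)),
      (G.induce (↑W : Set (Fin n))).Reachable
        ⟨u, Finset.mem_coe.mpr hu⟩ ⟨x, hx⟩} with hR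
  set w : Fin n → 𝕜 := R.indicator 1 with hw
  have huR : u ∈ R := ⟨Finset.mem_coe.mpr hu, SimpleGraph.Reachable.refl _⟩
  have hwu : w u = 1 := Set.indicator_of_mem huR 1
  have hwv : w v = 0 := Set.indicator_of_notMem (fun h => h.elim fun _ hr => hreach hr) 1
  have hwadj : ∀ a b : Fin n, a ∈ W → b ∈ W → G.Adj a b → w a = w b := by
    intro a b ha hb hab
    have step : ∀ x y (hx : x ∈ W) (hy : y ∈ W), G.Adj x y → x ∈ R → y ∈ R := by
      rintro x y hx hy hxy ⟨hx', hr⟩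
      refine ⟨Finset.mem_coe.mpr hy, hr.trans (SimpleGraph.Adj.reachable ?_)⟩
      exact hxy
    by_cases hA : a ∈ R
    · rw [hw, Set.indicator_of_mem hA, Set.indicator_of_mem (step a b ha hb hab hA)]
      rfl
    · have hB : b ∉ R := fun hB => hA (step b a hb ha hab.symm hB)
      rw [hw, Set.indicator_of_notMem hA, Set.indicator_of_notMem hB]
  -- membership of faces
  have hfaces : ∀ t : Finset (Fin n),
      t ∈ K.faces ↔ G.IsClique (↑t : Set (Fin n)) ∧ (↑t : Set (Fin n)) ⊆ ↑W :=
    fun _ => Iff.rfl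
  have hempty : (∅ : Finset (Fin n)) ∈ K.faces := by
    rw [hfaces]; constructor
    · simp [SimpleGraph.IsClique]
    · simp
  have hsingle : ∀ y, y ∈ W → ({y} : Finset (Fin n)) ∈ K.faces := by
    intro y hy
    rw [hfaces]; constructor
    · simp [SimpleGraph.IsClique]
    · simp [hy]
  let e0 : K.dimFaces (0 - 1) := ⟨∅, hempty, by simp⟩
  let sOf : ∀ y, y ∈ W → K.dimFaces 0 := fun y hy => ⟨{y}, hsingle y hy, by simp⟩
  -- boundary of vertices
  have hsing : ∀ t : K.dimFaces 0,
      chainBoundary K 𝕜 0 (Finsupp.single t 1) = Finsupp.single e0 1 := by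
    intro t
    obtain ⟨y, hy⟩ : ∃ y, t.1 = {y} := Finset.card_eq_one.mp (by exact_mod_cast t.2.2)
    rw [chainBoundary_single K 𝕜 0 t (fun _ => Finsupp.single e0 1) ?_]
    · rw [hy, Finset.sum_singleton]
      have hf : ({y} : Finset (Fin n)).filter (fun x => x < y) = ∅ := by
        simp [Finset.filter_singleton]
      rw [hf]
      simp
    · intro a ha
      refine congrArg (fun t : K.dimFaces (0 - 1) => Finsupp.single t (1 : 𝕜))
        (Subtype.ext ?_)
      rw [hy] at ha
      simp only [Finset.mem_singleton] at ha
      refine Eq.symm ((erase_instIrrel _ (instDecidableEqFin n) _ _).trans ?_)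
      show t.1.erase a = (∅ : Finset (Fin n))
      rw [ha, hy, Finset.erase_singleton]
  -- boundary of edges
  have hd1 : ∀ F : K.dimFaces 1, ∃ a b, ∃ (ha : a ∈ W) (hb : b ∈ W), G.Adj a b ∧
      chainBoundary K 𝕜 1 (Finsupp.single F 1) =
        Finsupp.single (sOf b hb) 1 - Finsupp.single (sOf a ha) 1 := by
    intro F
    have main : ∀ a b, a < b → F.1 = {a, b} → ∃ a' b', ∃ (ha : a' ∈ W) (hb : b' ∈ W),
        G.Adj a' b' ∧ chainBoundary K 𝕜 1 (Finsupp.single F 1) =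
          Finsupp.single (sOf b' hb) 1 - Finsupp.single (sOf a' ha) 1 := by
      intro a b hlt hF
      have hne : a ≠ b := ne_of_lt hlt
      have haF : a ∈ F.1 := by rw [hF]; simp
      have hbF : b ∈ F.1 := by rw [hF]; simp
      have hsub : (↑F.1 : Set (Fin n)) ⊆ ↑W := F.2.1.2
      have haW : a ∈ W := Finset.mem_coe.mp (hsub (Finset.mem_coe.mpr haF))
      have hbW : b ∈ W := Finset.mem_coe.mp (hsub (Finset.mem_coe.mpr hbF))
      have hadj : G.Adj a b := F.2.1.1 (Finset.mem_coe.mpr haF) (Finset.mem_coe.mpr hbF) hne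
      refine ⟨a, b, haW, hbW, hadj, ?_⟩
      have hgA : F.1.erase a = {b} := by
        rw [hF, Finset.erase_insert (by simp [hne])]
      have hgB : F.1.erase b = {a} := by
        rw [hF, Finset.pair_comm, Finset.erase_insert (by simp [hne.symm])]
      rw [chainBoundary_single K 𝕜 1 F
        (fun z => if z = a then Finsupp.single (sOf b hbW) 1
          else Finsupp.single (sOf a haW) 1) ?_]
      · rw [hF, Finset.sum_pair hne]
        have hfa : ({a, b} : Finset (Fin n)).filter (fun x => x < a) = ∅ := by
          simp [Finset.filter_insert, Finset.filter_singleton, not_lt_of_gt hlt]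
        have hfb : ({a, b} : Finset (Fin n)).filter (fun x => x < b) = {a} := by
          simp [Finset.filter_insert, Finset.filter_singleton, hlt]
        simp [hfa, hfb, hne.symm, sub_eq_add_neg]
      · intro z hz
        rw [hF] at hz
        rcases Finset.mem_insert.mp hz with h | h
        · show (if z = a then _ else _) = _
          rw [if_pos h]
          refine congrArg (fun t : K.dimFaces (1 - 1) => Finsupp.single t (1 : 𝕜))
            (Subtype.ext ?_)
          refine Eq.symm ((erase_instIrrel _ (instDecidableEqFin n) _ _).trans ?_)
          show F.1.erase z = ({b} : Finset (Fin n))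
          rw [h]; exact hgA
        · simp only [Finset.mem_singleton] at h
          show (if z = a then _ else _) = _
          rw [if_neg (by rw [h]; exact hne.symm)]
          refine congrArg (fun t : K.dimFaces (1 - 1) => Finsupp.single t (1 : 𝕜))
            (Subtype.ext ?_)
          refine Eq.symm ((erase_instIrrel _ (instDecidableEqFin n) _ _).trans ?_)
          show F.1.erase z = ({a} : Finset (Fin n))
          rw [h]; exact hgB
    obtain ⟨a, b, hne, hF⟩ := Finset.card_eq_two.mp (by exact_mod_cast F.2.2)
    rcases lt_or_gt_of_ne hne with hlt | hlt
    · exact main a b hlt hF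
    · exact main b a hlt (by rw [hF, Finset.pair_comm])
  -- the witnessing cycle
  let su : K.dimFaces 0 := sOf u hu
  let sv : K.dimFaces 0 := sOf v hv
  set x : K.dimFaces 0 →₀ 𝕜 := Finsupp.single su 1 - Finsupp.single sv 1 with hx
  have hx0 : chainBoundary K 𝕜 0 x = 0 := by
    rw [hx, map_sub, hsing, hsing, sub_self]
  have hφx : auxPhi K w 0 x = 1 := by
    rw [hx, map_sub, auxPhi_single, auxPhi_single]
    show (∑ z ∈ ({u} : Finset (Fin n)), w z) - (∑ z ∈ ({v} : Finset (Fin n)), w z) = 1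
    rw [Finset.sum_singleton, Finset.sum_singleton, hwu, hwv, sub_zero]
  -- finiteness
  haveI hfin0 : Finite (K.dimFaces 0) := by
    unfold AbsCx.dimFaces; infer_instance
  haveI hMF : Module.Finite 𝕜 (K.dimFaces 0 →₀ 𝕜) := inferInstance
  -- range of ∂₁ inside the two kernels
  set U : Submodule 𝕜 (K.dimFaces 0 →₀ 𝕜) :=
    LinearMap.ker (chainBoundary K 𝕜 0) ⊓ LinearMap.ker (auxPhi K w 0) with hU
  haveI hU1 : Module.Finite 𝕜 ↥U := FiniteDimensional.finiteDimensional_submodule U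
  haveI hU2 : Module.Finite 𝕜 ↥(LinearMap.ker (chainBoundary K 𝕜 0)) :=
    FiniteDimensional.finiteDimensional_submodule _
  have hrange : ∀ y : K.dimFaces 1 →₀ 𝕜, chainBoundary K 𝕜 1 y ∈ U := by
    intro y
    induction y using Finsupp.induction_linear with
    | zero => rw [map_zero]; exact zero_mem U
    | add f g hf hg => rw [map_add]; exact add_mem hf hg
    | single F c =>
      have hc : (Finsupp.single F c : K.dimFaces 1 →₀ 𝕜) = c • Finsupp.single F 1 := by
        rw [Finsupp.smul_single, smul_eq_mul, mul_one]
      rw [hc, map_smul]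
      refine Submodule.smul_mem U c ?_
      obtain ⟨a, b, ha, hb, hadj, heq⟩ := hd1 F
      rw [heq, hU]
      refine Submodule.mem_inf.mpr ⟨?_, ?_⟩
      · rw [LinearMap.mem_ker, map_sub, hsing, hsing, sub_self]
      · rw [LinearMap.mem_ker, map_sub, auxPhi_single, auxPhi_single]
        show (∑ z ∈ ({b} : Finset (Fin n)), w z) - (∑ z ∈ ({a} : Finset (Fin n)), w z) = 0
        rw [Finset.sum_singleton, Finset.sum_singleton, hwadj a b ha hb hadj, sub_self]
  let d1 : (K.dimFaces 1 →₀ 𝕜) →ₗ[𝕜] (K.dimFaces 0 →₀ 𝕜) := by exact chainBoundary K 𝕜 (0 + 1)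
  have hrange' : LinearMap.range d1 ≤ U := by
    rintro z ⟨y, rfl⟩
    exact hrange y
  have hxker : x ∈ LinearMap.ker (chainBoundary K 𝕜 0) := LinearMap.mem_ker.mpr hx0
  have hxnot : x ∉ U := by
    intro h
    have h2 := (Submodule.mem_inf.mp h).2
    rw [LinearMap.mem_ker, hφx] at h2
    exact one_ne_zero h2
  have hlt : U < LinearMap.ker (chainBoundary K 𝕜 0) := by
    refine lt_of_le_of_ne inf_le_left fun h => hxnot ?_
    rw [h]; exact hxker
  have hfr : Module.finrank 𝕜 (LinearMap.range d1) <
      Module.finrank 𝕜 (LinearMap.ker (chainBoundary K 𝕜 0)) :=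
    lt_of_le_of_lt (Submodule.finrank_mono hrange')
      (Submodule.finrank_lt_finrank_of_lt hlt)
  unfold AbsCx.homDim
  exact Nat.sub_ne_zero_of_lt hfr

end Aux

/-- if `𝕜[Δ(G)]` has projective dimension `p`, then `G` is
`(n - p - 1)`-connected. -/
theorem kConnected_of_projDim (𝕜 : Type*) [Field 𝕜] [CharZero 𝕜] {n : ℕ}
    (G : SimpleGraph (Fin n)) (p : ℕ)
    (hp : srProjDim 𝕜 (cliqueComplex G) = p) :
    KConnected G (n - p - 1) := by
  classical
  constructor
  · simp only [Fintype.card_fin]; omega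
  · intro s hs
    by_contra hcon
    have hn : s.card + p + 2 ≤ n := by
      have := Finset.card_le_univ s
      simp only [Finset.card_univ, Fintype.card_fin] at this
      omega
    rw [← Finset.coe_compl] at hcon
    set W : Finset (Fin n) := sᶜ with hW
    have hWcard : W.card = n - s.card := by
      rw [hW, Finset.card_compl, Fintype.card_fin]
    have hWpos : 0 < W.card := by omega
    have hne : Nonempty ((↑W : Set (Fin n))) := by
      obtain ⟨y, hy⟩ := Finset.card_pos.mp hWpos
      exact ⟨⟨y, Finset.mem_coe.mpr hy⟩⟩
    rw [SimpleGraph.connected_iff] at hcon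
    have hnotpre : ¬ (G.induce (↑W : Set (Fin n))).Preconnected :=
      fun hp' => hcon ⟨hp', hne⟩
    unfold SimpleGraph.Preconnected at hnotpre
    push_neg at hnotpre
    obtain ⟨⟨u, hu⟩, ⟨v, hv⟩, hruv⟩ := hnotpre
    have hkey := key_homDim (𝕜 := 𝕜) G W u v (Finset.mem_coe.mp hu)
      (Finset.mem_coe.mp hv) hruv
    set j0 := W.card with hj0
    have hj1 : 1 ≤ j0 := hWpos
    have hbetti : srBetti 𝕜 (cliqueComplex G) (j0 - 1) j0 ≠ 0 := by
      unfold srBetti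
      have hd : ((j0 : ℤ) - ((j0 - 1 : ℕ) : ℤ) - 1) = 0 := by omega
      intro h0
      rw [Finset.sum_eq_zero_iff] at h0
      have hterm := h0 W (Finset.mem_powersetCard_univ.mpr rfl)
      rw [hd] at hterm
      exact hkey hterm
    have hmem : (j0 - 1) ∈ {i : ℕ | ∃ j, srBetti 𝕜 (cliqueComplex G) i j ≠ 0} :=
      ⟨j0, hbetti⟩
    have hbdd : BddAbove {i : ℕ | ∃ j, srBetti 𝕜 (cliqueComplex G) i j ≠ 0} :=
      ⟨n, srBetti_bdd _⟩
    have hle := le_csSup hbdd hmem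
    unfold srProjDim at hp
    rw [hp] at hle
    omega
end
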